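/- arXiv:2007.12013 — 6 statements merged into one kernel-verified Lean document; each statement's English description precedes it below -/
import Mathlib

section
/- Let ρ > 2 and let f be holomorphic on the open ellipse D(ρ) with sup_{z ∈ D(ρ)} |f(z)| ≤ M_ρ < +∞. Define b_0 := (1/π) ∫_{−1}^{1} f(t)(1−t²)^{−1/2} dt and b_k := (2/π) ∫_{−1}^{1} f(t) T_k(t)(1−t²)^{−1/2} dt for k ≥ 1. Then for every n ∈ ℕ and every ρ' ∈ [1, ρ/2), sup_{t ∈ [−ρ', ρ']} |f(t) − Σ_{k=0}^{n−1} b_k T_k(t)| ≤ 2 M_ρ (1 − 2ρ'/ρ)^{−1} (2ρ'/ρ)^n. -/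
open MeasureTheory Real

noncomputable section

/-- Euclidean space ℝ^d. -/
abbrev Ed (d : ℕ) := EuclideanSpace ℝ (Fin d)

/-- The Fourier transform  ℱv(ξ) = (2π)^{-d} ∫ e^{i ξ·x} v(x) dx. -/
def FT {d : ℕ} (v : Ed d → ℂ) (ξ : Ed d) : ℂ :=
  ((((2 * π) ^ d)⁻¹ : ℝ) : ℂ) * ∫ x : Ed d, Complex.exp (Complex.I * ((inner ℝ ξ x : ℝ) : ℂ)) * v x

/-- The inverse Fourier transform  ℱ⁻¹u(x) = ∫ u(ξ) e^{-i ξ·x} dξ. -/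
def IFT {d : ℕ} (u : Ed d → ℂ) (x : Ed d) : ℂ :=
  ∫ ξ : Ed d, u ξ * Complex.exp (-(Complex.I * ((inner ℝ ξ x : ℝ) : ℂ)))

/-- Q_v(λ) = (2π)^{-d} ∫ e^{λ|x|} |v(x)| dx. -/
def Qv {d : ℕ} (v : Ed d → ℂ) (lam : ℝ) : ℝ :=
  ((2 * π) ^ d)⁻¹ * ∫ x : Ed d, Real.exp (lam * ‖x‖) * ‖v x‖

/-- The open ball B_r ⊆ ℝ^d. -/
def ball (d : ℕ) (r : ℝ) : Set (Ed d) := {ξ : Ed d | ‖ξ‖ < r}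

/-- The sup (L^∞) norm of f on the set S. -/
def supNormOn {d : ℕ} (S : Set (Ed d)) (f : Ed d → ℂ) : ℝ := ⨆ ξ ∈ S, ‖f ξ‖

/-- Membership in L^∞(B_r): measurable and bounded on B_r. -/
def MemLinf {d : ℕ} (r : ℝ) (w : Ed d → ℂ) : Prop :=
  Measurable w ∧ ∃ M : ℝ, ∀ ξ ∈ ball d r, ‖w ξ‖ ≤ M

/-- Chebyshev polynomial of the first kind, evaluated at a real point. -/
def cheb (k : ℕ) (t : ℝ) : ℝ := (Polynomial.Chebyshev.T ℝ k).eval t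

/-- Chebyshev coefficients a_k[w](θ) of the data w on B_r in direction θ. -/
def chebCoef {d : ℕ} (r : ℝ) (w : Ed d → ℂ) (k : ℕ) (θ : Ed d) : ℂ :=
  if k = 0 then
    ((π⁻¹ : ℝ) : ℂ) * ∫ t in (-r)..r, w (t • θ) / ((Real.sqrt (r ^ 2 - t ^ 2) : ℝ) : ℂ)
  else
    (((2 / π : ℝ)) : ℂ) *
      ∫ t in (-r)..r, w (t • θ) * ((cheb k (t / r) : ℝ) : ℂ) / ((Real.sqrt (r ^ 2 - t ^ 2) : ℝ) : ℂ)

/-- The Chebyshev-based extrapolation C_{R,n} w. -/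
def ChebExt {d : ℕ} (r R : ℝ) (n : ℕ) (w : Ed d → ℂ) (ξ : Ed d) : ℂ :=
  if ‖ξ‖ < r then w ξ
  else if ‖ξ‖ < R then
    ∑ k ∈ Finset.range n, chebCoef r w k (‖ξ‖⁻¹ • ξ) * ((cheb k (‖ξ‖ / r) : ℝ) : ℂ)
  else 0

/-- L_τ(δ) = max {1, ½((1-τ) ln(N/δ)/(σ r^ν))^τ }. -/
def Lt (N δ r σ ν τ : ℝ) : ℝ :=
  max 1 (((1 - τ) * Real.log (N / δ) / (σ * r ^ ν)) ^ τ / 2)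

/-- R_τ(δ) = r L_τ(δ). -/
def Rt (N δ r σ ν τ : ℝ) : ℝ := r * Lt N δ r σ ν τ

/-- n_τ(δ). -/
def nt (N δ r σ ν τ : ℝ) : ℕ :=
  if 0 < τ then
    ⌈(2 - τ) * Real.log (N / δ) / (Real.log 2 + (τ * ν)⁻¹ * Real.log (2 * Lt N δ r σ ν τ))⌉₊
  else 0

/-- The extrapolation C*_{τ,δ} = C_{R_τ(δ), n_τ(δ)}. -/
def Cstar {d : ℕ} (N δ r σ ν τ : ℝ) (w : Ed d → ℂ) : Ed d → ℂ :=
  ChebExt r (Rt N δ r σ ν τ) (nt N δ r σ ν τ) w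

/-- c(d) = d π^{d/2} / Γ(d/2 + 1), the surface measure of the unit sphere. -/
def cd (d : ℕ) : ℝ := d * π ^ ((d : ℝ) / 2) / Real.Gamma ((d : ℝ) / 2 + 1)

/-- The W^m norm: ‖(1+|ξ|²)^{m/2} ℱu‖_{L^∞}. -/
def Wnorm {d : ℕ} (m : ℝ) (v : Ed d → ℂ) : ℝ :=
  ⨆ ξ : Ed d, (1 + ‖ξ‖ ^ 2) ^ (m / 2) * ‖FT v ξ‖

/-- The L² norm of f on ℝ^d. -/
def L2Norm {d : ℕ} (f : Ed d → ℂ) : ℝ := Real.sqrt (∫ x : Ed d, ‖f x‖ ^ 2)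

/-- The Sobolev H^s norm: ‖ℱ⁻¹[(1+|ξ|²)^{s/2} ℱu]‖_{L²}. -/
def Hnorm {d : ℕ} (s : ℝ) (v : Ed d → ℂ) : ℝ :=
  L2Norm (IFT fun ξ => (((1 + ‖ξ‖ ^ 2) ^ (s / 2) : ℝ) : ℂ) * FT v ξ)

/-- The open ellipse D(ρ) = { cos z : |Im z| < ln ρ } ⊆ ℂ. -/
def ellipse (ρ : ℝ) : Set ℂ := {w : ℂ | ∃ z : ℂ, |z.im| < Real.log ρ ∧ Complex.cos z = w}

/-- Chebyshev coefficients b_k of a function on [-1,1]. -/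
def chebCoef1 (f : ℂ → ℂ) (k : ℕ) : ℂ :=
  if k = 0 then
    ((π⁻¹ : ℝ) : ℂ) * ∫ t in (-1 : ℝ)..1, f t / ((Real.sqrt (1 - t ^ 2) : ℝ) : ℂ)
  else
    (((2 / π : ℝ)) : ℂ) *
      ∫ t in (-1 : ℝ)..1, f t * ((cheb k t : ℝ) : ℂ) / ((Real.sqrt (1 - t ^ 2) : ℝ) : ℂ)

/-- The instability example v_{k,m,ε}(x) = ε |k|^{-m} e^{-|x|²/2} cos(k·x). -/
def vkme {d : ℕ} (k : Ed d) (m : ℕ) (ε : ℝ) (x : Ed d) : ℂ :=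
  ((ε * (‖k‖ ^ m)⁻¹ * Real.exp (-(‖x‖ ^ 2) / 2) * Real.cos (inner ℝ k x : ℝ) : ℝ) : ℂ)

namespace ChebAux

open Complex

/-- `G f z = f (cos z)`. -/
def G (f : ℂ → ℂ) (z : ℂ) : ℂ := f (Complex.cos z)

/-- Integral of `e^{-ikz} f(cos z)` over a horizontal segment at height `y`. -/
def lineInt (f : ℂ → ℂ) (k : ℤ) (y : ℝ) : ℂ :=
  ∫ x in (0:ℝ)..(2*π),
    Complex.exp (-Complex.I * (k:ℂ) * ((x:ℂ) + (y:ℂ) * Complex.I)) *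
      G f ((x:ℂ) + (y:ℂ) * Complex.I)

/-- Fourier coefficients of `θ ↦ f (cos θ)`. -/
def cc (f : ℂ → ℂ) (k : ℤ) : ℂ := ((2*π)⁻¹ : ℝ) • lineInt f k 0

variable {ρ M : ℝ} {f : ℂ → ℂ}

lemma mem_ellipse {z : ℂ} (hz : |z.im| < Real.log ρ) : Complex.cos z ∈ ellipse ρ :=
  ⟨z, hz, rfl⟩

lemma G_contOn (hf : DifferentiableOn ℂ f (ellipse ρ)) :
    ContinuousOn (G f) {z : ℂ | |z.im| < Real.log ρ} :=
  hf.continuousOn.comp Complex.continuous_cos.continuousOn fun z hz => ⟨z, hz, rfl⟩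

lemma G_diffOn (hf : DifferentiableOn ℂ f (ellipse ρ)) :
    DifferentiableOn ℂ (G f) {z : ℂ | |z.im| < Real.log ρ} :=
  hf.comp Complex.differentiable_cos.differentiableOn fun z hz => ⟨z, hz, rfl⟩

lemma line_mem {x y : ℝ} (hy : |y| < Real.log ρ) :
    ((x:ℂ) + (y:ℂ)*Complex.I) ∈ {z : ℂ | |z.im| < Real.log ρ} := by
  simpa using hy

lemma lineCont (hf : DifferentiableOn ℂ f (ellipse ρ)) {y : ℝ} (hy : |y| < Real.log ρ) :
    Continuous fun x : ℝ => G f ((x:ℂ) + (y:ℂ)*Complex.I) :=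
  (G_contOn hf).comp_continuous
    (Complex.continuous_ofReal.add continuous_const) fun x => line_mem hy

lemma lineCont' (hf : DifferentiableOn ℂ f (ellipse ρ)) {y : ℝ} (hy : |y| < Real.log ρ)
    (k : ℤ) : Continuous fun x : ℝ =>
      Complex.exp (-Complex.I*(k:ℂ)*((x:ℂ)+(y:ℂ)*Complex.I)) * G f ((x:ℂ)+(y:ℂ)*Complex.I) :=
  (Complex.continuous_exp.comp (by fun_prop)).mul (lineCont hf hy)

lemma lineInt_shift (hf : DifferentiableOn ℂ f (ellipse ρ)) (k : ℤ) {y : ℝ}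
    (hy : |y| < Real.log ρ) : lineInt f k y = lineInt f k 0 := by
  set H : ℂ → ℂ := fun z => Complex.exp (-Complex.I * (k:ℂ) * z) * G f z with hH
  have hsub : Set.uIcc (0:ℝ) (2*π) ×ℂ Set.uIcc (0:ℝ) y ⊆ {z : ℂ | |z.im| < Real.log ρ} := by
    intro z hz
    have him : z.im ∈ Set.uIcc (0:ℝ) y := hz.2
    have habs : |z.im| ≤ |y| := by
      rcases le_total 0 y with h | h
      · rw [Set.uIcc_of_le h] at him
        rw [_root_.abs_of_nonneg him.1, _root_.abs_of_nonneg h]; exact him.2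
      · rw [Set.uIcc_of_ge h] at him
        rw [_root_.abs_of_nonpos him.2, _root_.abs_of_nonpos h]; linarith [him.1]
    exact lt_of_le_of_lt habs hy
  have hdiff : DifferentiableOn ℂ H (Set.uIcc (0:ℝ) (2*π) ×ℂ Set.uIcc (0:ℝ) y) := by
    apply DifferentiableOn.mul
    · exact (Complex.differentiable_exp.comp (by fun_prop)).differentiableOn
    · exact (G_diffOn hf).mono hsub
  have E := Complex.integral_boundary_rect_eq_zero_of_differentiableOn H 0
      (((2*π : ℝ) : ℂ) + (y : ℂ) * Complex.I) (by
        apply hdiff.mono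
        intro z hz
        constructor
        · have := hz.1; simpa using this
        · have := hz.2; simpa using this)
  simp only [Complex.zero_re, Complex.zero_im, Complex.add_re, Complex.add_im,
    Complex.ofReal_re, Complex.ofReal_im, Complex.mul_re, Complex.mul_im,
    Complex.I_re, Complex.I_im, mul_zero, mul_one, zero_mul, zero_add, add_zero,
    sub_zero, zero_sub, Complex.ofReal_zero, neg_zero] at E
  have h0 : lineInt f k 0 = ∫ x in (0:ℝ)..(2*π), H ((x:ℂ)) := by
    unfold lineInt
    apply intervalIntegral.integral_congr
    intro x _
    norm_num [hH]
  have hyy : lineInt f k y = ∫ x in (0:ℝ)..(2*π), H ((x:ℂ) + (y:ℂ)*Complex.I) := rfl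
  have hver : ∀ t : ℝ, H (((2*π : ℝ):ℂ) + (t:ℂ)*Complex.I) = H ((t:ℂ)*Complex.I) := by
    intro t
    have harg : Complex.exp (-Complex.I*(k:ℂ)*(((2*π:ℝ):ℂ) + (t:ℂ)*Complex.I))
        = Complex.exp (-Complex.I*(k:ℂ)*((t:ℂ)*Complex.I)) := by
      rw [show -Complex.I*(k:ℂ)*(((2*π:ℝ):ℂ) + (t:ℂ)*Complex.I)
          = -Complex.I*(k:ℂ)*((t:ℂ)*Complex.I) + ((-k : ℤ):ℂ)*(2*(Real.pi:ℂ)*Complex.I) from by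
        push_cast; ring]
      rw [Complex.exp_add, Complex.exp_int_mul_two_pi_mul_I, mul_one]
    have hcos : Complex.cos (((2*π:ℝ):ℂ) + (t:ℂ)*Complex.I)
        = Complex.cos ((t:ℂ)*Complex.I) := by
      rw [show (((2*π:ℝ):ℂ) + (t:ℂ)*Complex.I) = ((t:ℂ)*Complex.I) + 2*(Real.pi:ℂ) from by
        push_cast; ring]
      exact Complex.cos_add_two_pi _
    simp only [hH, G, hcos, harg]
  rw [← h0, ← hyy] at E
  have hv : (∫ t in (0:ℝ)..y, H (((2*π:ℝ):ℂ) + (t:ℂ)*Complex.I))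
      = ∫ t in (0:ℝ)..y, H ((t:ℂ)*Complex.I) := by
    apply intervalIntegral.integral_congr
    intro t _
    exact hver t
  rw [hv] at E
  exact (by linear_combination -E : lineInt f k y = lineInt f k 0)

lemma norm_lineInt_le (hM : ∀ z ∈ ellipse ρ, ‖f z‖ ≤ M) (k : ℤ) {y : ℝ}
    (hy : |y| < Real.log ρ) :
    ‖lineInt f k y‖ ≤ M * Real.exp ((k:ℝ) * y) * (2*π) := by
  have h := intervalIntegral.norm_integral_le_of_norm_le_const
    (C := M * Real.exp ((k:ℝ)*y))
    (f := fun x : ℝ => Complex.exp (-Complex.I*(k:ℂ)*((x:ℂ)+(y:ℂ)*Complex.I)) *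
      G f ((x:ℂ)+(y:ℂ)*Complex.I)) (a := 0) (b := 2*π) ?_
  · calc ‖lineInt f k y‖ ≤ M * Real.exp ((k:ℝ)*y) * |2*π - 0| := h
      _ = M * Real.exp ((k:ℝ)*y) * (2*π) := by
          rw [sub_zero, _root_.abs_of_pos (by positivity)]
  · intro x _
    rw [norm_mul]
    have h1 : ‖Complex.exp (-Complex.I*(k:ℂ)*((x:ℂ)+(y:ℂ)*Complex.I))‖
        = Real.exp ((k:ℝ)*y) := by
      rw [show -Complex.I*(k:ℂ)*((x:ℂ)+(y:ℂ)*Complex.I)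
          = (((k:ℝ)*y : ℝ):ℂ) + ((-((k:ℝ)*x) : ℝ):ℂ)*Complex.I from by
        push_cast; linear_combination (-(k:ℂ)*(y:ℂ)) * Complex.I_sq]
      rw [Complex.norm_exp]
      congr 1
      simp
    have h2 : ‖G f ((x:ℂ)+(y:ℂ)*Complex.I)‖ ≤ M := hM _ (mem_ellipse (line_mem hy))
    rw [h1, mul_comm M]
    exact mul_le_mul_of_nonneg_left h2 (Real.exp_pos _).le

lemma norm_cc_le (hρ : 2 < ρ) (hf : DifferentiableOn ℂ f (ellipse ρ))
    (hM : ∀ z ∈ ellipse ρ, ‖f z‖ ≤ M) (k : ℤ) :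
    ‖cc f k‖ ≤ M * ((ρ ^ k.natAbs)⁻¹) := by
  have hρ0 : (0:ℝ) < ρ := by linarith
  have hlog : 0 < Real.log ρ := Real.log_pos (by linarith)
  have key : ∀ h ∈ Set.Ioo (0:ℝ) (Real.log ρ),
      ‖cc f k‖ ≤ M * Real.exp (-((k.natAbs : ℝ) * h)) := by
    intro h hh
    set y : ℝ := if 0 ≤ k then -h else h with hydef
    have habs : |y| = h := by
      rw [hydef]; split_ifs
      · rw [abs_neg, _root_.abs_of_pos hh.1]
      · rw [_root_.abs_of_pos hh.1]
    have hyabs : |y| < Real.log ρ := by rw [habs]; exact hh.2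
    have hky : (k:ℝ) * y = -((k.natAbs : ℝ) * h) := by
      rw [hydef]; split_ifs with hk
      · have hcast : ((k.natAbs : ℝ)) = (k:ℝ) := by
          rw [Nat.cast_natAbs]; exact_mod_cast _root_.abs_of_nonneg hk
        rw [hcast]; ring
      · push_neg at hk
        have hcast : ((k.natAbs : ℝ)) = -(k:ℝ) := by
          rw [Nat.cast_natAbs]; exact_mod_cast _root_.abs_of_nonpos hk.le
        rw [hcast]; ring
    have h1 : ‖cc f k‖ = (2*π)⁻¹ * ‖lineInt f k 0‖ := by
      rw [cc, norm_smul, Real.norm_eq_abs, _root_.abs_of_pos (by positivity)]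
    rw [h1, ← lineInt_shift hf k hyabs]
    calc (2*π)⁻¹ * ‖lineInt f k y‖
        ≤ (2*π)⁻¹ * (M * Real.exp ((k:ℝ)*y) * (2*π)) := by
          apply mul_le_mul_of_nonneg_left (norm_lineInt_le hM k hyabs) (by positivity)
      _ = M * Real.exp ((k:ℝ)*y) := by
          field_simp
      _ = M * Real.exp (-((k.natAbs : ℝ) * h)) := by rw [hky]
  have htend : Filter.Tendsto (fun h : ℝ => M * Real.exp (-((k.natAbs : ℝ) * h)))
      (nhdsWithin (Real.log ρ) (Set.Iio (Real.log ρ)))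
      (nhds (M * Real.exp (-((k.natAbs : ℝ) * Real.log ρ)))) := by
    apply Filter.Tendsto.mono_left _ nhdsWithin_le_nhds
    exact (Real.continuous_exp.comp (by continuity)).tendsto _ |>.const_mul M
  have hev : ∀ᶠ h in nhdsWithin (Real.log ρ) (Set.Iio (Real.log ρ)),
      ‖cc f k‖ ≤ M * Real.exp (-((k.natAbs : ℝ) * h)) := by
    filter_upwards [Ioo_mem_nhdsLT_of_mem (Set.mem_Ioc.mpr ⟨hlog, le_refl _⟩)] with h hh
    exact key h hh
  have hfin := ge_of_tendsto htend hev
  have : M * Real.exp (-((k.natAbs : ℝ) * Real.log ρ)) = M * (ρ ^ k.natAbs)⁻¹ := by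
    rw [Real.exp_neg]
    congr 2
    rw [Real.exp_nat_mul, Real.exp_log hρ0]
  rwa [this] at hfin

lemma lineInt_zero_eq (hf : DifferentiableOn ℂ f (ellipse ρ)) (hρ : 2 < ρ) (k : ℤ) :
    lineInt f k 0 = ∫ θ in (0:ℝ)..π, G f (θ:ℂ) *
      (Complex.exp (-Complex.I*(k:ℂ)*(θ:ℂ)) + Complex.exp (Complex.I*(k:ℂ)*(θ:ℂ))) := by
  have hlog : 0 < Real.log ρ := Real.log_pos (by linarith)
  have habs0 : |(0:ℝ)| < Real.log ρ := by simpa using hlog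
  have hGcont : Continuous fun x : ℝ => G f (x:ℂ) := by
    have := lineCont hf habs0
    simpa using this
  have hcontm : ∀ c : ℂ, Continuous fun x : ℝ => Complex.exp (c*(x:ℂ)) * G f (x:ℂ) := by
    intro c
    exact (Complex.continuous_exp.comp (by fun_prop)).mul hGcont
  have h0 : lineInt f k 0 = ∫ x in (0:ℝ)..(2*π),
      Complex.exp (-Complex.I*(k:ℂ)*(x:ℂ)) * G f (x:ℂ) := by
    unfold lineInt
    apply intervalIntegral.integral_congr
    intro x _
    norm_num
  have hsplit : (∫ x in (0:ℝ)..π, Complex.exp (-Complex.I*(k:ℂ)*(x:ℂ)) * G f (x:ℂ))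
      + (∫ x in π..(2*π), Complex.exp (-Complex.I*(k:ℂ)*(x:ℂ)) * G f (x:ℂ))
      = ∫ x in (0:ℝ)..(2*π), Complex.exp (-Complex.I*(k:ℂ)*(x:ℂ)) * G f (x:ℂ) := by
    apply intervalIntegral.integral_add_adjacent_intervals
    · exact (hcontm (-Complex.I*(k:ℂ))).intervalIntegrable _ _
    · exact (hcontm (-Complex.I*(k:ℂ))).intervalIntegrable _ _
  have hsecond : (∫ x in π..(2*π), Complex.exp (-Complex.I*(k:ℂ)*(x:ℂ)) * G f (x:ℂ))
      = ∫ x in (0:ℝ)..π, Complex.exp (Complex.I*(k:ℂ)*(x:ℂ)) * G f (x:ℂ) := by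
    have hc := intervalIntegral.integral_comp_sub_left (a := 0) (b := π)
      (fun x : ℝ => Complex.exp (-Complex.I*(k:ℂ)*(x:ℂ)) * G f (x:ℂ)) (2*π)
    rw [show 2*π - π = π from by ring, sub_zero] at hc
    rw [← hc]
    apply intervalIntegral.integral_congr
    intro x _
    have hG : G f ((2*π - x : ℝ):ℂ) = G f (x:ℂ) := by
      unfold G
      congr 1
      rw [← Complex.ofReal_cos, ← Complex.ofReal_cos]
      norm_num [Real.cos_sub, Real.cos_two_pi, Real.sin_two_pi]
    have hexp : Complex.exp (-Complex.I*(k:ℂ)*((2*π - x : ℝ):ℂ))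
        = Complex.exp (Complex.I*(k:ℂ)*(x:ℂ)) := by
      rw [show -Complex.I*(k:ℂ)*((2*π - x : ℝ):ℂ)
          = Complex.I*(k:ℂ)*(x:ℂ) + ((-k : ℤ):ℂ)*(2*(Real.pi:ℂ)*Complex.I) from by
        push_cast; ring]
      rw [Complex.exp_add, Complex.exp_int_mul_two_pi_mul_I, mul_one]
    show Complex.exp (-Complex.I*(k:ℂ)*((2*π - x : ℝ):ℂ)) * G f ((2*π - x : ℝ):ℂ) = _
    rw [hG, hexp]
  rw [h0, ← hsplit, hsecond,
    ← intervalIntegral.integral_add ((hcontm _).intervalIntegrable _ _)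
      ((hcontm _).intervalIntegrable _ _)]
  apply intervalIntegral.integral_congr
  intro x _
  ring

lemma cc_neg (hf : DifferentiableOn ℂ f (ellipse ρ)) (hρ : 2 < ρ) (k : ℤ) :
    cc f (-k) = cc f k := by
  unfold cc
  rw [lineInt_zero_eq hf hρ, lineInt_zero_eq hf hρ]
  congr 1
  apply intervalIntegral.integral_congr
  intro x _
  have h1 : -Complex.I*((-k : ℤ):ℂ)*(x:ℂ) = Complex.I*(k:ℂ)*(x:ℂ) := by push_cast; ring
  have h2 : Complex.I*((-k : ℤ):ℂ)*(x:ℂ) = -Complex.I*(k:ℂ)*(x:ℂ) := by push_cast; ring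
  show G f (x:ℂ) * (Complex.exp (-Complex.I*((-k : ℤ):ℂ)*(x:ℂ)) + Complex.exp (Complex.I*((-k : ℤ):ℂ)*(x:ℂ))) = _
  rw [h1, h2, add_comm]

lemma cos_image : Real.cos '' Set.Ioo 0 π = Set.Ioo (-1:ℝ) 1 := by
  ext x
  constructor
  · rintro ⟨θ, ⟨h0, hπ⟩, rfl⟩
    have hmem1 : (0:ℝ) ∈ Set.Icc (0:ℝ) π := ⟨le_refl _, Real.pi_pos.le⟩
    have hmem2 : θ ∈ Set.Icc (0:ℝ) π := ⟨h0.le, hπ.le⟩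
    have hmem3 : π ∈ Set.Icc (0:ℝ) π := ⟨Real.pi_pos.le, le_refl _⟩
    constructor
    · have := Real.strictAntiOn_cos hmem2 hmem3 hπ
      rw [Real.cos_pi] at this; linarith
    · have := Real.strictAntiOn_cos hmem1 hmem2 h0
      rw [Real.cos_zero] at this; linarith
  · rintro ⟨h1, h2⟩
    refine ⟨Real.arccos x, ⟨Real.arccos_pos.2 h2, ?_⟩, Real.cos_arccos h1.le h2.le⟩
    have : -(π/2) < Real.arcsin x := Real.neg_pi_div_two_lt_arcsin.2 h1
    rw [Real.arccos]; linarith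

lemma chebInt (hf : DifferentiableOn ℂ f (ellipse ρ)) (hρ : 2 < ρ) (k : ℕ) :
    (∫ t in (-1:ℝ)..1, f (t:ℂ) * ((cheb k t : ℝ):ℂ) / ((Real.sqrt (1 - t^2) : ℝ):ℂ))
      = ∫ θ in (0:ℝ)..π, G f (θ:ℂ) * ((Real.cos (k*θ) : ℝ):ℂ) := by
  rw [intervalIntegral.integral_of_le (by norm_num : (-1:ℝ) ≤ 1),
      intervalIntegral.integral_of_le Real.pi_pos.le,
      MeasureTheory.integral_Ioc_eq_integral_Ioo,
      MeasureTheory.integral_Ioc_eq_integral_Ioo, ← cos_image,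
      MeasureTheory.integral_image_eq_integral_abs_deriv_smul measurableSet_Ioo
        (fun θ _ => (Real.hasDerivAt_cos θ).hasDerivWithinAt)
        (Real.injOn_cos.mono Set.Ioo_subset_Icc_self)]
  apply MeasureTheory.setIntegral_congr_fun measurableSet_Ioo
  intro θ hθ
  obtain ⟨h0, hπ⟩ := hθ
  have hsin : 0 < Real.sin θ := Real.sin_pos_of_pos_of_lt_pi h0 hπ
  have hsqrt : Real.sqrt (1 - Real.cos θ^2) = Real.sin θ := by
    rw [show 1 - Real.cos θ^2 = Real.sin θ^2 from by
      have := Real.sin_sq_add_cos_sq θ; linarith, Real.sqrt_sq hsin.le]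
  have hcheb : cheb k (Real.cos θ) = Real.cos (k*θ) := by
    unfold cheb
    rw [Polynomial.Chebyshev.T_real_cos θ (k:ℤ)]
    norm_num
  show |(-Real.sin θ)| • _ = _
  rw [abs_neg, _root_.abs_of_pos hsin, hsqrt, hcheb]
  have hGθ : G f ((θ:ℝ):ℂ) = f ((Real.cos θ : ℝ):ℂ) := by
    unfold G; rw [← Complex.ofReal_cos]
  rw [Complex.real_smul]
  simp only [hGθ]
  have hne : ((Real.sin θ : ℝ):ℂ) ≠ 0 := Complex.ofReal_ne_zero.mpr hsin.ne'
  field_simp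

lemma chebCoef1_zero (hf : DifferentiableOn ℂ f (ellipse ρ)) (hρ : 2 < ρ) :
    chebCoef1 f 0 = cc f 0 := by
  unfold chebCoef1
  rw [if_pos rfl, cc, lineInt_zero_eq hf hρ 0]
  have h1 : (∫ t in (-1:ℝ)..1, f (t:ℂ) / ((Real.sqrt (1 - t^2) : ℝ):ℂ))
      = ∫ θ in (0:ℝ)..π, G f (θ:ℂ) * ((Real.cos ((0:ℕ)*θ) : ℝ):ℂ) := by
    rw [← chebInt hf hρ 0]
    apply intervalIntegral.integral_congr
    intro t _
    unfold cheb
    norm_num [Polynomial.Chebyshev.T_zero]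
  rw [h1]
  have h2 : (∫ θ in (0:ℝ)..π, G f (θ:ℂ) * ((Real.cos ((0:ℕ)*θ) : ℝ):ℂ))
      = ∫ θ in (0:ℝ)..π, G f (θ:ℂ) := by
    apply intervalIntegral.integral_congr; intro θ _; norm_num
  have h3 : (∫ θ in (0:ℝ)..π, G f (θ:ℂ) *
      (Complex.exp (-Complex.I*((0:ℤ):ℂ)*(θ:ℂ)) + Complex.exp (Complex.I*((0:ℤ):ℂ)*(θ:ℂ))))
      = (2:ℂ) * ∫ θ in (0:ℝ)..π, G f (θ:ℂ) := by
    rw [← intervalIntegral.integral_const_mul]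
    apply intervalIntegral.integral_congr; intro θ _
    norm_num
    ring
  rw [h2, h3, Complex.real_smul]
  have hπ : (Real.pi:ℂ) ≠ 0 := Complex.ofReal_ne_zero.mpr Real.pi_ne_zero
  push_cast
  field_simp

lemma chebCoef1_pos (hf : DifferentiableOn ℂ f (ellipse ρ)) (hρ : 2 < ρ) {k : ℕ} (hk : k ≠ 0) :
    chebCoef1 f k = 2 * cc f k := by
  unfold chebCoef1
  rw [if_neg hk, cc, lineInt_zero_eq hf hρ k, chebInt hf hρ k]
  have h3 : (∫ θ in (0:ℝ)..π, G f (θ:ℂ) *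
      (Complex.exp (-Complex.I*((k:ℤ):ℂ)*(θ:ℂ)) + Complex.exp (Complex.I*((k:ℤ):ℂ)*(θ:ℂ))))
      = (2:ℂ) * ∫ θ in (0:ℝ)..π, G f (θ:ℂ) * ((Real.cos (k*θ) : ℝ):ℂ) := by
    rw [← intervalIntegral.integral_const_mul]
    apply intervalIntegral.integral_congr
    intro θ _
    have h2c := Complex.two_cos ((k:ℂ)*(θ:ℂ))
    have e1 : Complex.exp (((k:ℂ)*(θ:ℂ)) * Complex.I) = Complex.exp (Complex.I*((k:ℤ):ℂ)*(θ:ℂ)) := by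
      congr 1; push_cast; ring
    have e2 : Complex.exp (-((k:ℂ)*(θ:ℂ)) * Complex.I) = Complex.exp (-Complex.I*((k:ℤ):ℂ)*(θ:ℂ)) := by
      congr 1; push_cast; ring
    rw [e1, e2] at h2c
    have hcos : ((Real.cos (k*θ) : ℝ):ℂ) = Complex.cos ((k:ℂ)*(θ:ℂ)) := by
      rw [Complex.ofReal_cos]
      push_cast
      ring_nf
    show G f (θ:ℂ) * (Complex.exp (-Complex.I*((k:ℤ):ℂ)*(θ:ℂ))
        + Complex.exp (Complex.I*((k:ℤ):ℂ)*(θ:ℂ)))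
      = 2 * (G f (θ:ℂ) * ((Real.cos (k*θ) : ℝ):ℂ))
    rw [hcos]
    linear_combination (-(G f (θ:ℂ))) * h2c
  rw [h3, Complex.real_smul]
  have hπ : (Real.pi:ℂ) ≠ 0 := Complex.ofReal_ne_zero.mpr Real.pi_ne_zero
  push_cast
  field_simp

lemma summable_geom_int {C q : ℝ} (h0 : 0 ≤ q) (h1 : q < 1) :
    Summable fun k : ℤ => C * q ^ k.natAbs := by
  apply Summable.of_nat_of_neg
  · simpa using (summable_geometric_of_lt_one h0 h1).mul_left C
  · simpa using (summable_geometric_of_lt_one h0 h1).mul_left C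

lemma hasSum_line (hρ : 2 < ρ) (hf : DifferentiableOn ℂ f (ellipse ρ))
    (hM : ∀ z ∈ ellipse ρ, ‖f z‖ ≤ M) {y : ℝ} (hy : |y| < Real.log ρ) (x₀ : ℝ) :
    HasSum (fun k : ℤ => cc f k * Complex.exp (Complex.I*(k:ℂ)*((x₀:ℂ) + (y:ℂ)*Complex.I)))
      (G f ((x₀:ℂ) + (y:ℂ)*Complex.I)) := by
  have hρ0 : (0:ℝ) < ρ := by linarith
  have hM0 : 0 ≤ M := le_trans (norm_nonneg (f 1))
    (hM 1 ⟨0, by simpa using Real.log_pos (by linarith), by simp⟩)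
  haveI : Fact (0 < 2*π) := ⟨by positivity⟩
  have hper : Function.Periodic (fun x : ℝ => G f ((x:ℂ) + (y:ℂ)*Complex.I)) (2*π) := by
    intro x
    show G f (((x + 2*π : ℝ):ℂ) + (y:ℂ)*Complex.I) = _
    unfold G
    congr 1
    rw [show ((x + 2*π : ℝ):ℂ) + (y:ℂ)*Complex.I
        = ((x:ℂ) + (y:ℂ)*Complex.I) + 2*(Real.pi:ℂ) from by push_cast; ring]
    exact Complex.cos_add_two_pi _
  have hcont : Continuous fun x : ℝ => G f ((x:ℂ) + (y:ℂ)*Complex.I) := lineCont hf hy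
  let gC : C(AddCircle (2*π), ℂ) := ⟨hper.lift, hcont.quotient_liftOn' _⟩
  have hgC : ∀ x : ℝ, gC ((x : ℝ) : AddCircle (2*π)) = G f ((x:ℂ) + (y:ℂ)*Complex.I) :=
    fun x => hper.lift_coe x
  have hπc : (Real.pi:ℂ) ≠ 0 := Complex.ofReal_ne_zero.mpr Real.pi_ne_zero
  have hcoef : ∀ k : ℤ, fourierCoeff (⇑gC) k
      = ((Real.exp (-((k:ℝ)*y)) : ℝ):ℂ) * cc f k := by
    intro k
    rw [fourierCoeff_eq_intervalIntegral (⇑gC) k 0]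
    have heq : (fun x : ℝ => (fourier (-k) ((x : ℝ) : AddCircle (2*π))) • gC ((x : ℝ) : AddCircle (2*π)))
        = fun x : ℝ => ((Real.exp (-((k:ℝ)*y)) : ℝ):ℂ) *
          (Complex.exp (-Complex.I*(k:ℂ)*((x:ℂ)+(y:ℂ)*Complex.I)) * G f ((x:ℂ)+(y:ℂ)*Complex.I)) := by
      funext x
      rw [hgC x, smul_eq_mul, ← mul_assoc]
      congr 1
      have hfour : (fourier (-k) ((x : ℝ) : AddCircle (2*π)) : ℂ)
          = Complex.exp (-(Complex.I*(k:ℂ)*(x:ℂ))) := by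
        rw [fourier_coe_apply]
        congr 1
        push_cast
        field_simp
      rw [hfour, Complex.ofReal_exp, ← Complex.exp_add]
      congr 1
      push_cast
      linear_combination ((k:ℂ)*(y:ℂ))*Complex.I_sq
    rw [heq, intervalIntegral.integral_const_mul]
    have hL : (∫ x in (0:ℝ)..(0 + 2*π),
        Complex.exp (-Complex.I*(k:ℂ)*((x:ℂ)+(y:ℂ)*Complex.I)) * G f ((x:ℂ)+(y:ℂ)*Complex.I))
        = lineInt f k 0 := by
      rw [zero_add]
      exact lineInt_shift hf k hy
    rw [hL, cc, mul_smul_comm, one_div]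
  -- summability of the Fourier coefficients
  have hq0 : (0:ℝ) ≤ Real.exp |y| / ρ := by positivity
  have hq1 : Real.exp |y| / ρ < 1 := by
    rw [div_lt_one hρ0]
    calc Real.exp |y| < Real.exp (Real.log ρ) := Real.exp_lt_exp.2 hy
      _ = ρ := Real.exp_log hρ0
  have hbound : ∀ k : ℤ, ‖fourierCoeff (⇑gC) k‖ ≤ M * (Real.exp |y| / ρ) ^ k.natAbs := by
    intro k
    rw [hcoef k, norm_mul]
    have h1 : ‖((Real.exp (-((k:ℝ)*y)) : ℝ):ℂ)‖ = Real.exp (-((k:ℝ)*y)) := by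
      rw [Complex.norm_real, Real.norm_eq_abs, _root_.abs_of_pos (Real.exp_pos _)]
    rw [h1]
    have h2 : Real.exp (-((k:ℝ)*y)) ≤ Real.exp ((k.natAbs : ℝ) * |y|) := by
      apply Real.exp_le_exp.2
      calc -((k:ℝ)*y) ≤ |(k:ℝ)*y| := neg_le_abs _
        _ = |(k:ℝ)| * |y| := abs_mul _ _
        _ = (k.natAbs : ℝ) * |y| := by rw [Nat.cast_natAbs, Int.cast_abs]
    calc Real.exp (-((k:ℝ)*y)) * ‖cc f k‖
        ≤ Real.exp ((k.natAbs : ℝ) * |y|) * (M * ((ρ ^ k.natAbs)⁻¹)) := by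
          apply mul_le_mul h2 (norm_cc_le hρ hf hM k) (norm_nonneg _) (Real.exp_pos _).le
      _ = M * (Real.exp |y| / ρ) ^ k.natAbs := by
          rw [Real.exp_nat_mul, div_pow]
          field_simp
  have hsummable : Summable (fourierCoeff (⇑gC)) :=
    Summable.of_norm_bounded (summable_geom_int hq0 hq1) hbound
  have hps := has_pointwise_sum_fourier_series_of_summable hsummable ((x₀ : ℝ) : AddCircle (2*π))
  rw [hgC x₀] at hps
  have hterm : ∀ k : ℤ, (fourierCoeff (⇑gC) k) • fourier k ((x₀ : ℝ) : AddCircle (2*π))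
      = cc f k * Complex.exp (Complex.I*(k:ℂ)*((x₀:ℂ) + (y:ℂ)*Complex.I)) := by
    intro k
    have hfour : (fourier k ((x₀ : ℝ) : AddCircle (2*π)) : ℂ)
        = Complex.exp (Complex.I*(k:ℂ)*(x₀:ℂ)) := by
      rw [fourier_coe_apply]
      congr 1
      push_cast
      field_simp
    have harg2 : Complex.I*(k:ℂ)*((x₀:ℂ)+(y:ℂ)*Complex.I)
        = ((-((k:ℝ)*y) : ℝ):ℂ) + Complex.I*(k:ℂ)*(x₀:ℂ) := by
      push_cast
      linear_combination ((k:ℂ)*(y:ℂ))*Complex.I_sq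
    rw [hcoef k, smul_eq_mul, hfour, harg2, Complex.exp_add, Complex.ofReal_exp]
    ring
  have hfun : (fun k : ℤ => (fourierCoeff (⇑gC) k) • fourier k ((x₀ : ℝ) : AddCircle (2*π)))
      = fun k : ℤ => cc f k * Complex.exp (Complex.I*(k:ℂ)*((x₀:ℂ) + (y:ℂ)*Complex.I)) :=
    funext hterm
  rwa [hfun] at hps

lemma cheb_complex {n : ℕ} {z₀ : ℂ} {t : ℝ} (h : Complex.cos z₀ = (t:ℂ)) :
    ((cheb n t : ℝ) : ℂ) = Complex.cos ((n:ℂ) * z₀) := by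
  have h1 : ((cheb n t : ℝ) : ℂ) = (Polynomial.Chebyshev.T ℂ (n:ℤ)).eval ((t:ℝ):ℂ) := by
    rw [← Polynomial.Chebyshev.map_T Complex.ofRealHom (n:ℤ), Polynomial.eval_map,
      show ((t:ℝ):ℂ) = Complex.ofRealHom t from rfl, Polynomial.eval₂_at_apply]
    rfl
  rw [h1, ← h, Polynomial.Chebyshev.T_complex_cos]
  norm_num

lemma exists_z {ρ' : ℝ} (hρ'1 : 1 ≤ ρ') {t : ℝ} (ht : t ∈ Set.Icc (-ρ') ρ') :
    ∃ z₀ : ℂ, Complex.cos z₀ = (t:ℂ) ∧ |z₀.im| ≤ Real.log (2*ρ') := by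
  have hL0 : (0:ℝ) ≤ Real.log (2*ρ') := Real.log_nonneg (by linarith)
  have htρ : |t| ≤ ρ' := abs_le.2 ⟨ht.1, ht.2⟩
  rcases le_or_gt |t| 1 with h1 | h1
  · refine ⟨((Real.arccos t : ℝ) : ℂ), ?_, by simpa using hL0⟩
    rw [← Complex.ofReal_cos, Real.cos_arccos (abs_le.1 h1).1 (abs_le.1 h1).2]
  · set u := |t| + Real.sqrt (t^2 - 1) with hu
    have hsq : Real.sqrt (t^2-1)^2 = t^2-1 := Real.sq_sqrt (by nlinarith [_root_.sq_abs t])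
    have hu1 : 1 < u := lt_of_lt_of_le h1 (le_add_of_nonneg_right (Real.sqrt_nonneg _))
    have hu0 : 0 < u := by linarith
    have hcosh : Real.cosh (Real.log u) = |t| := by
      rw [Real.cosh_eq, Real.exp_log hu0, Real.exp_neg, Real.exp_log hu0]
      have hinv : u⁻¹ = |t| - Real.sqrt (t^2-1) := by
        apply inv_eq_of_mul_eq_one_right
        have habs : |t|^2 = t^2 := _root_.sq_abs t
        nlinarith
      rw [hinv, hu]; ring
    have hs0 : 0 ≤ Real.log u := Real.log_nonneg hu1.le
    have hsL : Real.log u ≤ Real.log (2*ρ') := by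
      apply Real.log_le_log hu0
      have hsq2 : Real.sqrt (t^2-1) ≤ |t| := by
        rw [← Real.sqrt_sq_eq_abs]
        apply Real.sqrt_le_sqrt
        linarith
      rw [hu]; linarith
    rcases le_or_gt 0 t with hsign | hsign
    · refine ⟨((Real.log u : ℝ):ℂ) * Complex.I, ?_, ?_⟩
      · rw [Complex.cos_mul_I, ← Complex.ofReal_cosh, hcosh, _root_.abs_of_nonneg hsign]
      · simp only [Complex.mul_im, Complex.ofReal_re, Complex.ofReal_im, Complex.I_im,
          Complex.I_re, mul_zero, mul_one, zero_mul, add_zero, zero_add]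
        rwa [_root_.abs_of_nonneg hs0]
    · refine ⟨((Real.pi : ℝ):ℂ) - ((Real.log u : ℝ):ℂ) * Complex.I, ?_, ?_⟩
      · rw [Complex.cos_pi_sub, Complex.cos_mul_I, ← Complex.ofReal_cosh, hcosh,
          _root_.abs_of_neg hsign]
        push_cast; ring
      · simp only [Complex.sub_im, Complex.mul_im, Complex.ofReal_re, Complex.ofReal_im,
          Complex.I_im, Complex.I_re, mul_zero, mul_one, zero_mul, add_zero, zero_add,
          zero_sub, abs_neg]
        rwa [_root_.abs_of_nonneg hs0]

end ChebAux

/-- Lemma 7.1 of Isaev–Novikov (Chebyshev approximation of holomorphic functions). -/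
theorem chebyshev_approximation (ρ M : ℝ) (hρ : 2 < ρ) (f : ℂ → ℂ)
    (hf : DifferentiableOn ℂ f (ellipse ρ))
    (hM : ∀ z ∈ ellipse ρ, ‖f z‖ ≤ M)
    (n : ℕ) (ρ' : ℝ) (hρ'1 : 1 ≤ ρ') (hρ'2 : ρ' < ρ / 2) :
    ∀ t : ℝ, t ∈ Set.Icc (-ρ') ρ' →
      ‖f t - ∑ k ∈ Finset.range n, chebCoef1 f k * ((cheb k t : ℝ) : ℂ)‖ ≤
        2 * M * (1 - 2 * ρ' / ρ)⁻¹ * (2 * ρ' / ρ) ^ n := by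
  intro t ht
  have hρ0 : (0:ℝ) < ρ := by linarith
  have hρ'0 : (0:ℝ) < ρ' := by linarith
  set r : ℝ := 2*ρ'/ρ with hr
  have hr0 : 0 < r := by positivity
  have hr1 : r < 1 := by rw [hr, div_lt_one hρ0]; linarith
  have hM0 : 0 ≤ M := le_trans (norm_nonneg (f 1))
    (hM 1 ⟨0, by simpa using Real.log_pos (by linarith), by simp⟩)
  obtain ⟨z₀, hz₀, him⟩ := ChebAux.exists_z hρ'1 ht
  have hyρ : |z₀.im| < Real.log ρ :=
    lt_of_le_of_lt him (Real.log_lt_log (by positivity) (by linarith))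
  have hs := ChebAux.hasSum_line hρ hf hM hyρ z₀.re
  rw [Complex.re_add_im z₀] at hs
  have hGz : ChebAux.G f z₀ = f (t:ℂ) := by unfold ChebAux.G; rw [hz₀]
  rw [hGz] at hs
  set a : ℤ → ℂ := fun k => ChebAux.cc f k * Complex.exp (Complex.I*(k:ℂ)*z₀) with ha
  have hnat := hs.nat_add_neg
  have hterm : ∀ m : ℕ, a (m:ℤ) + a (-(m:ℤ))
      = chebCoef1 f m * ((cheb m t : ℝ):ℂ) + (if m = 0 then a 0 else 0) := by
    intro m
    rcases eq_or_ne m 0 with rfl | hm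
    · simp only [Nat.cast_zero, neg_zero, if_pos rfl]
      have hcheb0 : ((cheb 0 t : ℝ):ℂ) = 1 := by
        norm_num [cheb, Polynomial.Chebyshev.T_zero]
      have h0 : chebCoef1 f 0 * ((cheb 0 t : ℝ):ℂ) = a 0 := by
        rw [ChebAux.chebCoef1_zero hf hρ, hcheb0, ha]
        simp
      rw [h0]
      simp
    · rw [if_neg hm, add_zero, ChebAux.chebCoef1_pos hf hρ hm, ChebAux.cheb_complex hz₀]
      have hcneg : ChebAux.cc f (-(m:ℤ)) = ChebAux.cc f (m:ℤ) := ChebAux.cc_neg hf hρ _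
      simp only [ha]
      rw [hcneg]
      have h2c := Complex.two_cos ((m:ℂ)*z₀)
      have e1 : Complex.exp (((m:ℂ)*z₀) * Complex.I)
          = Complex.exp (Complex.I*((m:ℤ):ℂ)*z₀) := by
        congr 1; push_cast; ring
      have e2 : Complex.exp (-((m:ℂ)*z₀) * Complex.I)
          = Complex.exp (Complex.I*((-(m:ℤ)):ℂ)*z₀) := by
        congr 1; push_cast; ring
      rw [e1, e2] at h2c
      push_cast at h2c ⊢
      linear_combination (-(ChebAux.cc f (m:ℤ))) * h2c
  have hδ : HasSum (fun m : ℕ => if m = 0 then a 0 else 0) (a 0) := hasSum_ite_eq 0 (a 0)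
  have He : HasSum (fun m : ℕ => chebCoef1 f m * ((cheb m t : ℝ):ℂ)) (f (t:ℂ)) := by
    have hsub := hnat.sub hδ
    have hfun : (fun m : ℕ => (a (m:ℤ) + a (-(m:ℤ))) - (if m = 0 then a 0 else 0))
        = fun m : ℕ => chebCoef1 f m * ((cheb m t : ℝ):ℂ) := by
      funext m
      rw [hterm m]
      ring
    rw [hfun] at hsub
    simpa using hsub
  have hna : ∀ k : ℤ, ‖a k‖ ≤ M * r ^ k.natAbs := by
    intro k
    simp only [ha]
    rw [norm_mul]
    have h1 : ‖Complex.exp (Complex.I*(k:ℂ)*z₀)‖ ≤ (2*ρ')^k.natAbs := by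
      have hre : (Complex.I*(k:ℂ)*z₀).re = -((k:ℝ) * z₀.im) := by
        simp [Complex.mul_re, Complex.mul_im, Complex.I_re, Complex.I_im,
          Complex.intCast_re, Complex.intCast_im]
      rw [Complex.norm_exp, hre]
      calc Real.exp (-((k:ℝ)*z₀.im)) ≤ Real.exp ((k.natAbs:ℝ) * Real.log (2*ρ')) := by
            apply Real.exp_le_exp.2
            calc -((k:ℝ)*z₀.im) ≤ |(k:ℝ)*z₀.im| := neg_le_abs _
              _ = |(k:ℝ)| * |z₀.im| := abs_mul _ _
              _ ≤ |(k:ℝ)| * Real.log (2*ρ') := by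
                  exact mul_le_mul_of_nonneg_left him (abs_nonneg _)
              _ = (k.natAbs:ℝ) * Real.log (2*ρ') := by rw [Nat.cast_natAbs, Int.cast_abs]
        _ = (2*ρ')^k.natAbs := by
            rw [Real.exp_nat_mul, Real.exp_log (by positivity)]
    calc ‖ChebAux.cc f k‖ * ‖Complex.exp (Complex.I*(k:ℂ)*z₀)‖
        ≤ (M * ((ρ ^ k.natAbs)⁻¹)) * (2*ρ')^k.natAbs := by
          apply mul_le_mul (ChebAux.norm_cc_le hρ hf hM k) h1 (norm_nonneg _) (by positivity)
      _ = M * r ^ k.natAbs := by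
          rw [hr, div_pow]
          have : (0:ℝ) < ρ ^ k.natAbs := by positivity
          field_simp
  have hbnd : ∀ m : ℕ, ‖chebCoef1 f m * ((cheb m t : ℝ):ℂ)‖ ≤ 2*M*r^m := by
    intro m
    rcases eq_or_ne m 0 with rfl | hm
    · have h0 := hterm 0
      rw [if_pos rfl] at h0
      simp only [Nat.cast_zero, neg_zero] at h0
      have he0 : chebCoef1 f 0 * ((cheb 0 t : ℝ):ℂ) = a 0 := by linear_combination -h0
      rw [he0]
      calc ‖a 0‖ ≤ M * r ^ (0:ℤ).natAbs := hna 0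
        _ = M := by norm_num
        _ ≤ 2*M*r^0 := by rw [pow_zero]; linarith
    · have h0 := hterm m
      rw [if_neg hm, add_zero] at h0
      rw [← h0]
      calc ‖a (m:ℤ) + a (-(m:ℤ))‖ ≤ ‖a (m:ℤ)‖ + ‖a (-(m:ℤ))‖ := norm_add_le _ _
        _ ≤ M * r ^ (m:ℤ).natAbs + M * r ^ (-(m:ℤ)).natAbs := add_le_add (hna _) (hna _)
        _ = 2*M*r^m := by
            simp only [Int.natAbs_neg, Int.natAbs_natCast]
            ring
  have hsum : Summable (fun m : ℕ => chebCoef1 f m * ((cheb m t : ℝ):ℂ)) := He.summable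
  have hkey := Summable.sum_add_tsum_nat_add
    (f := fun m : ℕ => chebCoef1 f m * ((cheb m t : ℝ):ℂ)) n hsum
  have hrem : f (t:ℂ) - (∑ k ∈ Finset.range n, chebCoef1 f k * ((cheb k t : ℝ):ℂ))
      = ∑' i : ℕ, chebCoef1 f (i+n) * ((cheb (i+n) t : ℝ):ℂ) := by
    rw [← He.tsum_eq, ← hkey]
    ring
  rw [hrem]
  have hgeo : HasSum (fun i : ℕ => (2*M*r^n) * r^i) ((2*M*r^n) * (1-r)⁻¹) :=
    (hasSum_geometric_of_lt_one hr0.le hr1).mul_left _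
  have hfin := tsum_of_norm_bounded hgeo (fun i => by
    calc ‖chebCoef1 f (i+n) * ((cheb (i+n) t : ℝ):ℂ)‖ ≤ 2*M*r^(i+n) := hbnd _
      _ = 2*M*r^n * r^i := by rw [pow_add]; ring)
  calc ‖∑' i : ℕ, chebCoef1 f (i+n) * ((cheb (i+n) t : ℝ):ℂ)‖
      ≤ (2*M*r^n) * (1-r)⁻¹ := hfin
    _ = 2*M*(1-r)⁻¹*r^n := by ring

end
end

section
/- Let d ≥ 1 and 0 < r ≤ R. Then for every n ∈ ℕ and all w₁, w₂ ∈ L^∞(B_r), ‖C_{R,n}w₁ − C_{R,n}w₂‖_{L^∞(B_R)} ≤ 2 (2R/r)^n ‖w₁ − w₂‖_{L^∞(B_r)}. -/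
open MeasureTheory Real

noncomputable section

/-! Auxiliary lemmas -/

section Aux
open MeasureTheory Real

lemma aux_eqon_one : Set.EqOn (fun x : ℝ => |Real.cos x| • (Real.sqrt (1 - Real.sin x ^ 2))⁻¹)
    (fun _ => (1:ℝ)) (Set.Ioo (-(π/2)) (π/2)) := by
  intro x hx
  have hc : 0 < Real.cos x := Real.cos_pos_of_mem_Ioo hx
  have h1 : 1 - Real.sin x ^ 2 = Real.cos x ^ 2 := by
    have := Real.sin_sq_add_cos_sq x; linarith
  simp only [h1, Real.sqrt_sq hc.le, abs_of_pos hc, smul_eq_mul]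
  field_simp

lemma aux_invsqrt_intOn :
    IntegrableOn (fun x : ℝ => (Real.sqrt (1 - x ^ 2))⁻¹) (Set.Icc (-1 : ℝ) 1) := by
  have himg : Real.sin '' Set.Icc (-(π/2)) (π/2) = Set.Icc (-1 : ℝ) 1 := Real.bijOn_sin.image_eq
  have hder : ∀ x ∈ Set.Icc (-(π/2)) (π/2),
      HasDerivWithinAt Real.sin (Real.cos x) (Set.Icc (-(π/2)) (π/2)) x :=
    fun x _ => (Real.hasDerivAt_sin x).hasDerivWithinAt
  rw [← himg, MeasureTheory.integrableOn_image_iff_integrableOn_abs_deriv_smul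
      measurableSet_Icc hder Real.injOn_sin]
  rw [integrableOn_Icc_iff_integrableOn_Ioo]
  exact (MeasureTheory.integrableOn_const (C := (1:ℝ)) measure_Ioo_lt_top.ne).congr_fun
    aux_eqon_one.symm measurableSet_Ioo

lemma aux_invsqrt_integral : ∫ x in Set.Icc (-1 : ℝ) 1, (Real.sqrt (1 - x ^ 2))⁻¹ = π := by
  have himg : Real.sin '' Set.Icc (-(π/2)) (π/2) = Set.Icc (-1 : ℝ) 1 := Real.bijOn_sin.image_eq
  have hder : ∀ x ∈ Set.Icc (-(π/2)) (π/2),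
      HasDerivWithinAt Real.sin (Real.cos x) (Set.Icc (-(π/2)) (π/2)) x :=
    fun x _ => (Real.hasDerivAt_sin x).hasDerivWithinAt
  rw [← himg, MeasureTheory.integral_image_eq_integral_abs_deriv_smul
      measurableSet_Icc hder Real.injOn_sin]
  rw [MeasureTheory.integral_Icc_eq_integral_Ioo,
    MeasureTheory.setIntegral_congr_fun measurableSet_Ioo aux_eqon_one]
  simp [Real.volume_Ioo]; linarith [Real.pi_pos]

lemma aux_invsqrt_scale {r : ℝ} (hr : 0 < r) (x : ℝ) :
    |r| • (Real.sqrt (r ^ 2 - (r * x) ^ 2))⁻¹ = (Real.sqrt (1 - x ^ 2))⁻¹ := by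
  have h1 : r ^ 2 - (r * x) ^ 2 = r ^ 2 * (1 - x ^ 2) := by ring
  rw [h1, Real.sqrt_mul (sq_nonneg r), Real.sqrt_sq hr.le, smul_eq_mul, abs_of_pos hr,
    mul_inv, ← mul_assoc, mul_inv_cancel₀ hr.ne', one_mul]

lemma aux_invsqrt_intOn_r {r : ℝ} (hr : 0 < r) :
    IntegrableOn (fun t : ℝ => (Real.sqrt (r ^ 2 - t ^ 2))⁻¹) (Set.Icc (-r) r) := by
  have himg : (fun x => r * x) '' Set.Icc (-1 : ℝ) 1 = Set.Icc (-r) r := by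
    rw [Set.image_mul_left_Icc' hr]; norm_num
  have hder : ∀ x ∈ Set.Icc (-1 : ℝ) 1,
      HasDerivWithinAt (fun x => r * x) r (Set.Icc (-1 : ℝ) 1) x := fun x _ => by
    simpa using ((hasDerivAt_id x).const_mul r).hasDerivWithinAt
  have hinj : Set.InjOn (fun x => r * x) (Set.Icc (-1 : ℝ) 1) :=
    fun a _ b _ h => by field_simp at h; exact h
  rw [← himg, MeasureTheory.integrableOn_image_iff_integrableOn_abs_deriv_smul
      measurableSet_Icc hder hinj]
  simpa only [aux_invsqrt_scale hr] using aux_invsqrt_intOn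

lemma aux_invsqrt_integral_r {r : ℝ} (hr : 0 < r) :
    ∫ t in Set.Icc (-r) r, (Real.sqrt (r ^ 2 - t ^ 2))⁻¹ = π := by
  have himg : (fun x => r * x) '' Set.Icc (-1 : ℝ) 1 = Set.Icc (-r) r := by
    rw [Set.image_mul_left_Icc' hr]; norm_num
  have hder : ∀ x ∈ Set.Icc (-1 : ℝ) 1,
      HasDerivWithinAt (fun x => r * x) r (Set.Icc (-1 : ℝ) 1) x := fun x _ => by
    simpa using ((hasDerivAt_id x).const_mul r).hasDerivWithinAt
  have hinj : Set.InjOn (fun x => r * x) (Set.Icc (-1 : ℝ) 1) :=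
    fun a _ b _ h => by field_simp at h; exact h
  rw [← himg, MeasureTheory.integral_image_eq_integral_abs_deriv_smul
      measurableSet_Icc hder hinj]
  simpa only [aux_invsqrt_scale hr] using aux_invsqrt_integral

end Aux

lemma aux_cheb_zero (x : ℝ) : cheb 0 x = 1 := by simp [cheb, Polynomial.Chebyshev.T_zero]
lemma aux_cheb_one (x : ℝ) : cheb 1 x = x := by simp [cheb, Polynomial.Chebyshev.T_one]
lemma aux_cheb_step (k : ℕ) (x : ℝ) : cheb (k+2) x = 2 * x * cheb (k+1) x - cheb k x := by
  unfold cheb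
  rw [show ((k+2 : ℕ) : ℤ) = (k : ℤ) + 2 from by push_cast; ring,
    Polynomial.Chebyshev.T_add_two]
  push_cast
  simp [Polynomial.eval_mul, Polynomial.eval_sub]

lemma aux_abs_cheb_le_one {k : ℕ} {t : ℝ} (h : |t| ≤ 1) : |cheb k t| ≤ 1 := by
  rcases abs_le.1 h with ⟨h1, h2⟩
  have : cheb k t = Real.cos (k * Real.arccos t) := by
    rw [cheb, ← Real.cos_arccos h1 h2, Polynomial.Chebyshev.T_real_cos,
      Real.cos_arccos h1 h2]
    norm_num
  rw [this]; exact Real.abs_cos_le_one _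

lemma aux_cheb_mono {x : ℝ} (hx : 1 ≤ x) (k : ℕ) : 0 ≤ cheb k x ∧ cheb k x ≤ cheb (k+1) x := by
  induction k with
  | zero => constructor <;> simp [aux_cheb_zero, aux_cheb_one, hx]
  | succ k ih =>
    obtain ⟨h0, h1⟩ := ih
    have h2 : 0 ≤ cheb (k+1) x := h0.trans h1
    refine ⟨h2, ?_⟩
    rw [aux_cheb_step]
    nlinarith

lemma aux_cheb_le_pow {x : ℝ} (hx : 1 ≤ x) (k : ℕ) :
    cheb k x ≤ (2*x)^k ∧ cheb (k+1) x ≤ (2*x)^(k+1) := by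
  induction k with
  | zero => constructor <;> simp [aux_cheb_zero, aux_cheb_one] <;> linarith
  | succ k ih =>
    obtain ⟨h0, h1⟩ := ih
    refine ⟨h1, ?_⟩
    rw [aux_cheb_step]
    have hc0 : 0 ≤ cheb k x := (aux_cheb_mono hx k).1
    have h2x : (0:ℝ) ≤ 2*x := by linarith
    have : 2 * x * cheb (k+1) x ≤ 2*x*(2*x)^(k+1) := by nlinarith
    calc 2 * x * cheb (k+1) x - cheb k x ≤ 2*x*(2*x)^(k+1) := by linarith
      _ = (2*x)^(k+2) := by ring

lemma aux_abs_cheb_le_pow {x : ℝ} (hx : 1 ≤ x) (k : ℕ) : |cheb k x| ≤ (2*x)^k := by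
  rw [abs_of_nonneg (aux_cheb_mono hx k).1]; exact (aux_cheb_le_pow hx k).1

lemma aux_geom_sum {q : ℝ} (hq : 2 ≤ q) (n : ℕ) : ∑ k ∈ Finset.range n, q ^ k ≤ q ^ n := by
  induction n with
  | zero => simp
  | succ n ih =>
    rw [Finset.sum_range_succ, pow_succ]
    have h0 : (0:ℝ) ≤ q^n := pow_nonneg (by linarith) n
    nlinarith

lemma aux_supNormOn_nonneg {d : ℕ} (S : Set (Ed d)) (f : Ed d → ℂ) : 0 ≤ supNormOn S f :=
  Real.iSup_nonneg fun _ => Real.iSup_nonneg fun _ => norm_nonneg _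

lemma aux_supNormOn_le {d : ℕ} {S : Set (Ed d)} {f : Ed d → ℂ} {c : ℝ} (hc : 0 ≤ c)
    (h : ∀ ξ ∈ S, ‖f ξ‖ ≤ c) : supNormOn S f ≤ c :=
  Real.iSup_le (fun ξ => Real.iSup_le (fun hξ => h ξ hξ) hc) hc

lemma aux_le_supNormOn {d : ℕ} {S : Set (Ed d)} {f : Ed d → ℂ} {C : ℝ}
    (hC : ∀ ξ ∈ S, ‖f ξ‖ ≤ C) {ξ : Ed d} (hξ : ξ ∈ S) : ‖f ξ‖ ≤ supNormOn S f := by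
  have hbdd : BddAbove (Set.range fun η => ⨆ _ : η ∈ S, ‖f η‖) := by
    refine ⟨max C 0, ?_⟩
    rintro x ⟨η, rfl⟩
    exact Real.iSup_le (fun h => (hC η h).trans (le_max_left _ _)) (le_max_right _ _)
  calc ‖f ξ‖ = ⨆ _ : ξ ∈ S, ‖f ξ‖ := (ciSup_pos (f := fun _ => ‖f ξ‖) hξ).symm
    _ ≤ supNormOn S f := le_ciSup hbdd ξ

lemma aux_key {r M : ℝ} (hr : 0 < r) (hM : 0 ≤ M) (g : ℝ → ℂ)
    (hgm : Measurable g)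
    (hb : ∀ t ∈ Set.Ioo (-r) r, ‖g t‖ ≤ M) :
    IntervalIntegrable (fun t => g t / ((Real.sqrt (r^2 - t^2) : ℝ) : ℂ))
        MeasureTheory.volume (-r) r ∧
    ‖∫ t in (-r)..r, g t / ((Real.sqrt (r^2 - t^2) : ℝ) : ℂ)‖ ≤ M * π := by
  have hrr : (-r : ℝ) ≤ r := by linarith
  have hcm : Measurable fun t : ℝ => Real.sqrt (r^2 - t^2) :=
    Real.continuous_sqrt.measurable.comp ((measurable_const.sub (measurable_id.pow_const 2)))
  have hfmeas : Measurable fun t => g t / ((Real.sqrt (r^2 - t^2) : ℝ) : ℂ) :=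
    hgm.div (Complex.measurable_ofReal.comp hcm)
  have hGint : MeasureTheory.IntegrableOn (fun t : ℝ => M * (Real.sqrt (r^2 - t^2))⁻¹)
      (Set.Ioc (-r) r) :=
    ((aux_invsqrt_intOn_r hr).mono_set Set.Ioc_subset_Icc_self).const_mul M
  have haene : ∀ᵐ t : ℝ ∂MeasureTheory.volume.restrict (Set.Ioc (-r) r), t ≠ r := by
    refine MeasureTheory.ae_restrict_of_ae ?_
    rw [MeasureTheory.ae_iff]
    simpa [Set.setOf_eq_eq_singleton] using Real.volume_singleton
  have haemem : ∀ᵐ t : ℝ ∂MeasureTheory.volume.restrict (Set.Ioc (-r) r),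
      t ∈ Set.Ioc (-r) r := MeasureTheory.ae_restrict_mem measurableSet_Ioc
  have haebd : ∀ᵐ t : ℝ ∂MeasureTheory.volume.restrict (Set.Ioc (-r) r),
      ‖g t / ((Real.sqrt (r^2 - t^2) : ℝ) : ℂ)‖ ≤ M * (Real.sqrt (r^2 - t^2))⁻¹ := by
    filter_upwards [haene, haemem] with t hne hmem
    have hIoo : t ∈ Set.Ioo (-r) r := ⟨hmem.1, lt_of_le_of_ne hmem.2 hne⟩
    have hc0 : 0 ≤ Real.sqrt (r^2 - t^2) := Real.sqrt_nonneg _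
    have hnorm : ‖g t / ((Real.sqrt (r^2 - t^2) : ℝ) : ℂ)‖
        = ‖g t‖ * (Real.sqrt (r^2 - t^2))⁻¹ := by
      rw [norm_div, Complex.norm_real, Real.norm_eq_abs, abs_of_nonneg hc0, div_eq_mul_inv]
    rw [hnorm]
    exact mul_le_mul_of_nonneg_right (hb t hIoo) (inv_nonneg.2 hc0)
  have hfint : MeasureTheory.IntegrableOn
      (fun t => g t / ((Real.sqrt (r^2 - t^2) : ℝ) : ℂ)) (Set.Ioc (-r) r) :=
    hGint.mono' hfmeas.aestronglyMeasurable haebd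
  constructor
  · exact (intervalIntegrable_iff_integrableOn_Ioc_of_le hrr).2 hfint
  · rw [intervalIntegral.integral_of_le hrr]
    calc ‖∫ t in Set.Ioc (-r) r, g t / ((Real.sqrt (r^2 - t^2) : ℝ) : ℂ)‖
        ≤ ∫ t in Set.Ioc (-r) r, ‖g t / ((Real.sqrt (r^2 - t^2) : ℝ) : ℂ)‖ :=
          MeasureTheory.norm_integral_le_integral_norm _
      _ ≤ ∫ t in Set.Ioc (-r) r, M * (Real.sqrt (r^2 - t^2))⁻¹ := by
          refine MeasureTheory.integral_mono_of_nonneg ?_ hGint haebd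
          exact Filter.Eventually.of_forall fun t => norm_nonneg _
      _ = M * ∫ t in Set.Ioc (-r) r, (Real.sqrt (r^2 - t^2))⁻¹ :=
          MeasureTheory.integral_const_mul M _
      _ = M * π := by
          rw [← MeasureTheory.integral_Icc_eq_integral_Ioc, aux_invsqrt_integral_r hr]

lemma aux_coef_bound {d : ℕ} {r : ℝ} (hr : 0 < r) {w₁ w₂ : Ed d → ℂ}
    (h₁ : Measurable w₁) (h₂ : Measurable w₂) (θ : Ed d) {M₁ M₂ M : ℝ} (hM : 0 ≤ M)
    (hb₁ : ∀ t ∈ Set.Ioo (-r) r, ‖w₁ (t • θ)‖ ≤ M₁)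
    (hb₂ : ∀ t ∈ Set.Ioo (-r) r, ‖w₂ (t • θ)‖ ≤ M₂)
    (hb : ∀ t ∈ Set.Ioo (-r) r, ‖w₁ (t • θ) - w₂ (t • θ)‖ ≤ M) (k : ℕ) :
    ‖chebCoef r w₁ k θ - chebCoef r w₂ k θ‖ ≤ 2 * M := by
  have h0r : (0:ℝ) ∈ Set.Ioo (-r) r := by constructor <;> linarith
  have hM₁0 : 0 ≤ M₁ := (norm_nonneg _).trans (hb₁ 0 h0r)
  have hM₂0 : 0 ≤ M₂ := (norm_nonneg _).trans (hb₂ 0 h0r)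
  have hsmul : Measurable fun t : ℝ => t • θ := by
    exact (continuous_id.smul continuous_const).measurable
  have hg₁ : Measurable (fun t : ℝ => w₁ (t • θ)) := h₁.comp hsmul
  have hg₂ : Measurable (fun t : ℝ => w₂ (t • θ)) := h₂.comp hsmul
  have hpi : (0:ℝ) < π := Real.pi_pos
  rcases Nat.eq_zero_or_pos k with hk | hk
  · subst hk
    simp only [chebCoef, reduceIte]
    have k₁ := aux_key hr hM₁0 _ hg₁ hb₁
    have k₂ := aux_key hr hM₂0 _ hg₂ hb₂
    have kd := aux_key hr hM _ (hg₁.sub hg₂) hb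
    rw [← mul_sub, ← intervalIntegral.integral_sub k₁.1 k₂.1]
    have heq : (fun t => w₁ (t • θ) / ((Real.sqrt (r^2 - t^2) : ℝ) : ℂ)
        - w₂ (t • θ) / ((Real.sqrt (r^2 - t^2) : ℝ) : ℂ))
        = fun t => (w₁ (t • θ) - w₂ (t • θ)) / ((Real.sqrt (r^2 - t^2) : ℝ) : ℂ) := by
      funext t; rw [div_sub_div_same]
    rw [intervalIntegral.integral_congr (fun t _ => congrFun heq t)]
    rw [norm_mul, Complex.norm_real, Real.norm_eq_abs, abs_of_pos (inv_pos.2 hpi)]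
    calc π⁻¹ * ‖∫ t in (-r)..r, (w₁ (t • θ) - w₂ (t • θ)) / ((Real.sqrt (r^2 - t^2) : ℝ) : ℂ)‖
        ≤ π⁻¹ * (M * π) := by
          exact mul_le_mul_of_nonneg_left kd.2 (inv_nonneg.2 hpi.le)
      _ = M := by field_simp
      _ ≤ 2 * M := by linarith
  · have hk0 : k ≠ 0 := hk.ne'
    simp only [chebCoef, if_neg hk0]
    have hT : ∀ t ∈ Set.Ioo (-r) r, |cheb k (t / r)| ≤ 1 := by
      intro t ht
      apply aux_abs_cheb_le_one
      rw [abs_div, abs_of_pos hr, div_le_one hr]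
      exact (abs_lt.2 ⟨ht.1, ht.2⟩).le
    set T : ℝ → ℂ := fun t => ((cheb k (t / r) : ℝ) : ℂ) with hTdef
    have hTm : Continuous T := by
      apply Complex.continuous_ofReal.comp
      exact (Polynomial.continuous _).comp (continuous_id.div_const r)
    have hTn : ∀ t ∈ Set.Ioo (-r) r, ‖T t‖ ≤ 1 := by
      intro t ht
      rw [hTdef]; simpa [Complex.norm_real, Real.norm_eq_abs] using hT t ht
    have hbb₁ : ∀ t ∈ Set.Ioo (-r) r, ‖w₁ (t • θ) * T t‖ ≤ M₁ := fun t ht => by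
      rw [norm_mul]
      calc ‖w₁ (t • θ)‖ * ‖T t‖ ≤ M₁ * 1 :=
        mul_le_mul (hb₁ t ht) (hTn t ht) (norm_nonneg _) hM₁0
      _ = M₁ := mul_one _
    have hbb₂ : ∀ t ∈ Set.Ioo (-r) r, ‖w₂ (t • θ) * T t‖ ≤ M₂ := fun t ht => by
      rw [norm_mul]
      calc ‖w₂ (t • θ)‖ * ‖T t‖ ≤ M₂ * 1 :=
        mul_le_mul (hb₂ t ht) (hTn t ht) (norm_nonneg _) hM₂0
      _ = M₂ := mul_one _
    have hbb : ∀ t ∈ Set.Ioo (-r) r, ‖(w₁ (t • θ) - w₂ (t • θ)) * T t‖ ≤ M := fun t ht => by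
      rw [norm_mul]
      calc ‖w₁ (t • θ) - w₂ (t • θ)‖ * ‖T t‖ ≤ M * 1 :=
        mul_le_mul (hb t ht) (hTn t ht) (norm_nonneg _) hM
      _ = M := mul_one _
    have k₁ := aux_key hr hM₁0 (fun t => w₁ (t • θ) * T t) (hg₁.mul hTm.measurable) hbb₁
    have k₂ := aux_key hr hM₂0 (fun t => w₂ (t • θ) * T t) (hg₂.mul hTm.measurable) hbb₂
    have kd := aux_key hr hM _ ((hg₁.sub hg₂).mul hTm.measurable) hbb
    rw [← mul_sub, ← intervalIntegral.integral_sub k₁.1 k₂.1]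
    have heq : ∀ t : ℝ, w₁ (t • θ) * T t / ((Real.sqrt (r^2 - t^2) : ℝ) : ℂ)
        - w₂ (t • θ) * T t / ((Real.sqrt (r^2 - t^2) : ℝ) : ℂ)
        = (w₁ (t • θ) - w₂ (t • θ)) * T t / ((Real.sqrt (r^2 - t^2) : ℝ) : ℂ) := by
      intro t; rw [div_sub_div_same, sub_mul]
    rw [intervalIntegral.integral_congr (fun t _ => heq t)]
    rw [norm_mul, Complex.norm_real, Real.norm_eq_abs,
      abs_of_pos (by positivity : (0:ℝ) < 2 / π)]
    calc (2/π) * ‖∫ t in (-r)..r,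
          (w₁ (t • θ) - w₂ (t • θ)) * T t / ((Real.sqrt (r^2 - t^2) : ℝ) : ℂ)‖
        ≤ (2/π) * (M * π) := mul_le_mul_of_nonneg_left kd.2 (by positivity)
      _ = 2 * M := by field_simp

/-- Lipschitz stability of the extrapolation C_{R,n} with respect to the data. -/
theorem extrapolation_data_stability {d : ℕ} (hd : 1 ≤ d) (r R : ℝ)
    (hr : 0 < r) (hrR : r ≤ R) (n : ℕ)
    (w₁ w₂ : Ed d → ℂ) (hw₁ : MemLinf r w₁) (hw₂ : MemLinf r w₂) :
    supNormOn (ball d R) (fun ξ => ChebExt r R n w₁ ξ - ChebExt r R n w₂ ξ) ≤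
      2 * (2 * R / r) ^ n * supNormOn (ball d r) (fun ξ => w₁ ξ - w₂ ξ) := by
  obtain ⟨hm₁, M₁, hM₁⟩ := hw₁
  obtain ⟨hm₂, M₂, hM₂⟩ := hw₂
  set q : ℝ := 2 * R / r with hqdef
  have hq2 : 2 ≤ q := by
    rw [hqdef, le_div_iff₀ hr]; linarith
  set M : ℝ := supNormOn (ball d r) (fun ξ => w₁ ξ - w₂ ξ) with hMdef
  have hM0 : 0 ≤ M := aux_supNormOn_nonneg _ _
  have hqn : 1 ≤ q ^ n := one_le_pow₀ (by linarith)
  have hC : ∀ ξ ∈ ball d r, ‖w₁ ξ - w₂ ξ‖ ≤ M₁ + M₂ := fun ξ h =>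
    (norm_sub_le _ _).trans (add_le_add (hM₁ ξ h) (hM₂ ξ h))
  have hleM : ∀ ξ ∈ ball d r, ‖w₁ ξ - w₂ ξ‖ ≤ M := fun ξ h =>
    aux_le_supNormOn hC h
  apply aux_supNormOn_le (by positivity)
  intro ξ hξ
  have hξR : ‖ξ‖ < R := hξ
  by_cases hlt : ‖ξ‖ < r
  · simp only [ChebExt, if_pos hlt]
    calc ‖w₁ ξ - w₂ ξ‖ ≤ M := hleM ξ hlt
      _ = 1 * M := (one_mul M).symm
      _ ≤ 2 * q ^ n * M := by nlinarith
  · simp only [ChebExt, if_neg hlt, if_pos hξR]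
    push_neg at hlt
    have hξ0 : ξ ≠ 0 := by
      intro h; rw [h, norm_zero] at hlt; linarith
    set θ : Ed d := ‖ξ‖⁻¹ • ξ with hθdef
    have hθ1 : ‖θ‖ = 1 := norm_smul_inv_norm hξ0
    have hmem : ∀ t ∈ Set.Ioo (-r) r, t • θ ∈ ball d r := by
      intro t ht
      show ‖t • θ‖ < r
      rw [norm_smul, hθ1, mul_one, Real.norm_eq_abs]
      exact abs_lt.2 ⟨ht.1, ht.2⟩
    have hb₁ : ∀ t ∈ Set.Ioo (-r) r, ‖w₁ (t • θ)‖ ≤ M₁ := fun t ht => hM₁ _ (hmem t ht)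
    have hb₂ : ∀ t ∈ Set.Ioo (-r) r, ‖w₂ (t • θ)‖ ≤ M₂ := fun t ht => hM₂ _ (hmem t ht)
    have hb : ∀ t ∈ Set.Ioo (-r) r, ‖w₁ (t • θ) - w₂ (t • θ)‖ ≤ M := fun t ht =>
      hleM _ (hmem t ht)
    have hx1 : 1 ≤ ‖ξ‖ / r := (one_le_div hr).2 hlt
    have hterm : ∀ k ∈ Finset.range n,
        ‖chebCoef r w₁ k θ * ((cheb k (‖ξ‖ / r) : ℝ) : ℂ)
          - chebCoef r w₂ k θ * ((cheb k (‖ξ‖ / r) : ℝ) : ℂ)‖ ≤ 2 * M * q ^ k := by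
      intro k _
      rw [← sub_mul, norm_mul, Complex.norm_real, Real.norm_eq_abs]
      have h1 : ‖chebCoef r w₁ k θ - chebCoef r w₂ k θ‖ ≤ 2 * M :=
        aux_coef_bound hr hm₁ hm₂ θ hM0 hb₁ hb₂ hb k
      have h2 : |cheb k (‖ξ‖ / r)| ≤ q ^ k := by
        refine (aux_abs_cheb_le_pow hx1 k).trans ?_
        have hle : 2 * (‖ξ‖ / r) ≤ q := by
          rw [hqdef, mul_div_assoc]
          have hRle := hξR.le
          gcongr
        exact pow_le_pow_left₀ (by positivity) hle k
      exact mul_le_mul h1 h2 (abs_nonneg _) (by positivity)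
    rw [← Finset.sum_sub_distrib]
    calc ‖∑ k ∈ Finset.range n, (chebCoef r w₁ k θ * ((cheb k (‖ξ‖ / r) : ℝ) : ℂ)
            - chebCoef r w₂ k θ * ((cheb k (‖ξ‖ / r) : ℝ) : ℂ))‖
        ≤ ∑ k ∈ Finset.range n, 2 * M * q ^ k := norm_sum_le_of_le _ hterm
      _ = 2 * M * ∑ k ∈ Finset.range n, q ^ k := by rw [Finset.mul_sum]
      _ ≤ 2 * M * q ^ n :=
          mul_le_mul_of_nonneg_left (aux_geom_sum hq2 n) (by positivity)
      _ = 2 * q ^ n * M := by ring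

end
end

section
/- Let d ≥ 1, let v ∈ L¹(ℝ^d), let λ, r > 0 with 2λ > r and Q_v(λ) < +∞, and let θ ∈ ℝ^d with |θ| = 1. Set ρ := 2λ/r. Then there exists a function g holomorphic on the open ellipse D(ρ) such that g(s) = ℱv(s r θ) for every real s ∈ D(ρ) ∩ ℝ, and |g(ζ)| ≤ Q_v(λ) for every ζ ∈ D(ρ). -/
open MeasureTheory Real

noncomputable section

lemma ellipse_im_lt {p : ℝ} (hp : 1 < p) {ζ : ℂ} (hζ : ζ ∈ ellipse p) :
    |ζ.im| < p / 2 := by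
  obtain ⟨z, hz, rfl⟩ := hζ
  have him : (Complex.cos z).im = -(Real.sin z.re * Real.sinh z.im) := by
    rw [Complex.cos_eq]; simp [Complex.sin_ofReal_re, Complex.sinh_ofReal_re]
  have h1 : |(Complex.cos z).im| ≤ |Real.sinh z.im| := by
    rw [him, abs_neg, abs_mul]
    refine mul_le_of_le_one_left (abs_nonneg _) ?_
    exact abs_le.mpr ⟨Real.neg_one_le_sin _, Real.sin_le_one _⟩
  have h2 : |Real.sinh z.im| < (p - p⁻¹) / 2 := by
    rw [Real.abs_sinh]
    calc Real.sinh |z.im| < Real.sinh (Real.log p) := Real.sinh_lt_sinh.mpr hz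
      _ = (p - p⁻¹) / 2 := Real.sinh_log (by linarith)
  have h3 : 0 < p⁻¹ := inv_pos.mpr (by linarith)
  linarith [h1.trans_lt h2]

/-- Holomorphic extension of s ↦ ℱv(srθ) to the ellipse D(2λ/r), bounded by Q_v(λ). -/
theorem FT_holomorphic_extension {d : ℕ} (hd : 1 ≤ d)
    (v : Ed d → ℂ) (hv : Integrable v)
    (lam r : ℝ) (hlam : 0 < lam) (hr : 0 < r) (h2 : r < 2 * lam)
    (hQ : Integrable (fun x : Ed d => Real.exp (lam * ‖x‖) * ‖v x‖))
    (θ : Ed d) (hθ : ‖θ‖ = 1) (ρ : ℝ) (hρ : ρ = 2 * lam / r) :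
    ∃ g : ℂ → ℂ, DifferentiableOn ℂ g (ellipse ρ) ∧
      (∀ s : ℝ, (s : ℂ) ∈ ellipse ρ → g s = FT v ((s * r) • θ)) ∧
      ∀ ζ ∈ ellipse ρ, ‖g ζ‖ ≤ Qv v lam := by
  have hρ1 : 1 < ρ := by
    rw [hρ]; exact (one_lt_div hr).mpr h2
  -- the candidate extension
  set t : Ed d → ℝ := fun x => inner ℝ θ x with ht
  set F : ℂ → Ed d → ℂ := fun ζ x =>
    Complex.exp (Complex.I * (ζ * ((r * t x : ℝ) : ℂ))) * v x with hF
  set g : ℂ → ℂ := fun ζ => ((((2 * π) ^ d)⁻¹ : ℝ) : ℂ) * ∫ x : Ed d, F ζ x with hg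
  have htle : ∀ x : Ed d, |t x| ≤ ‖x‖ := fun x => by
    have := abs_real_inner_le_norm θ x
    rwa [hθ, one_mul] at this
  have him : ∀ ζ ∈ ellipse ρ, r * |ζ.im| < lam := by
    intro ζ hζ
    have h := ellipse_im_lt hρ1 hζ
    rw [hρ] at h
    have : |ζ.im| < lam / r := by
      have : 2 * lam / r / 2 = lam / r := by ring
      linarith [this ▸ h]
    calc r * |ζ.im| < r * (lam / r) := by
          exact mul_lt_mul_of_pos_left this hr
      _ = lam := by field_simp
  -- norm of the exponential factor
  have hexp : ∀ (ζ : ℂ) (x : Ed d),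
      ‖Complex.exp (Complex.I * (ζ * ((r * t x : ℝ) : ℂ)))‖ ≤
        Real.exp (r * |ζ.im| * ‖x‖) := by
    intro ζ x
    rw [Complex.norm_exp]
    apply Real.exp_le_exp.mpr
    have hre : (Complex.I * (ζ * ((r * t x : ℝ) : ℂ))).re = -(ζ.im * (r * t x)) := by
      simp [Complex.mul_re, Complex.mul_im]
    rw [hre]
    calc -(ζ.im * (r * t x)) ≤ |ζ.im * (r * t x)| := neg_le_abs _
      _ = |ζ.im| * (r * |t x|) := by
          rw [abs_mul, abs_mul, abs_of_pos hr]
      _ ≤ |ζ.im| * (r * ‖x‖) := by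
          exact mul_le_mul_of_nonneg_left
            (mul_le_mul_of_nonneg_left (htle x) hr.le) (abs_nonneg _)
      _ = r * |ζ.im| * ‖x‖ := by ring
  -- pointwise bound
  have hbd : ∀ (ζ : ℂ), r * |ζ.im| ≤ lam → ∀ x : Ed d,
      ‖F ζ x‖ ≤ Real.exp (lam * ‖x‖) * ‖v x‖ := by
    intro ζ hζ x
    rw [hF]; dsimp only
    rw [norm_mul]
    refine mul_le_mul_of_nonneg_right ((hexp ζ x).trans ?_) (norm_nonneg _)
    exact Real.exp_le_exp.mpr (mul_le_mul_of_nonneg_right hζ (norm_nonneg _))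
  have htcont : Continuous t := by
    rw [ht]; exact continuous_const.inner continuous_id
  have hmeas : ∀ ζ : ℂ, AEStronglyMeasurable (F ζ) volume := by
    intro ζ
    exact ((Complex.continuous_exp.comp
      (continuous_const.mul ((continuous_const.mul
        (Complex.continuous_ofReal.comp (continuous_const.mul htcont))) :
        Continuous fun x : Ed d => ζ * ((r * t x : ℝ) : ℂ)))).aestronglyMeasurable).mul
      hv.aestronglyMeasurable
  have hint : ∀ (ζ : ℂ), r * |ζ.im| ≤ lam → Integrable (F ζ) := by
    intro ζ hζ
    refine hQ.mono (hmeas ζ) (Filter.Eventually.of_forall fun x => ?_)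
    calc ‖F ζ x‖ ≤ Real.exp (lam * ‖x‖) * ‖v x‖ := hbd ζ hζ x
      _ ≤ ‖Real.exp (lam * ‖x‖) * ‖v x‖‖ := le_abs_self _
  refine ⟨g, ?_, ?_, ?_⟩
  · -- differentiability
    intro ζ₀ hζ₀
    have hlt := him ζ₀ hζ₀
    set c : ℝ := (lam - r * |ζ₀.im|) / 2 with hc
    have hcpos : 0 < c := by rw [hc]; linarith
    set ε : ℝ := c / r with hε
    have hεpos : 0 < ε := div_pos hcpos hr
    -- on the ball, r * |ζ.im| ≤ lam - c
    have hball : ∀ ζ ∈ Metric.ball ζ₀ ε, r * |ζ.im| ≤ lam - c := by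
      intro ζ hζ
      have h1 : |ζ.im - ζ₀.im| ≤ ‖ζ - ζ₀‖ := by
        have := Complex.abs_im_le_norm (ζ - ζ₀)
        simpa [Complex.sub_im] using this
      have h2 : ‖ζ - ζ₀‖ < ε := by
        rw [← dist_eq_norm]; exact hζ
      have h3 : |ζ.im| ≤ |ζ₀.im| + ε := by
        have := abs_sub_abs_le_abs_sub ζ.im ζ₀.im
        linarith [h1.trans_lt h2]
      have : r * |ζ.im| ≤ r * |ζ₀.im| + r * ε := by nlinarith
      have hre : r * ε = c := by rw [hε]; field_simp
      rw [hc] at *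
      linarith [hre ▸ this]
    set F' : ℂ → Ed d → ℂ := fun ζ x =>
      (Complex.I * ((r * t x : ℝ) : ℂ)) * F ζ x with hF'
    have key := hasDerivAt_integral_of_dominated_loc_of_deriv_le
      (F := F) (F' := F') (x₀ := ζ₀)
      (bound := fun x => (r / c) * (Real.exp (lam * ‖x‖) * ‖v x‖)) (Metric.ball_mem_nhds ζ₀ hεpos)
      (Filter.Eventually.of_forall fun ζ => hmeas ζ)
      (hint ζ₀ hlt.le)
      (((continuous_const.mul
          (Complex.continuous_ofReal.comp (continuous_const.mul htcont)) :
          Continuous fun x : Ed d =>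
            Complex.I * ((r * t x : ℝ) : ℂ)).aestronglyMeasurable).mul (hmeas ζ₀))
      (Filter.Eventually.of_forall fun x => ?_)
      (hQ.const_mul _)
      (Filter.Eventually.of_forall fun x => ?_)
    · exact ((key.2.const_mul _).differentiableAt).differentiableWithinAt
    · -- bound on F'
      intro ζ hζ
      rw [hF']; dsimp only
      rw [norm_mul, norm_mul, Complex.norm_I, one_mul, Complex.norm_real,
        Real.norm_eq_abs, abs_mul, abs_of_pos hr]
      have h1 : ‖F ζ x‖ ≤ Real.exp ((lam - c) * ‖x‖) * ‖v x‖ := by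
        rw [hF]; dsimp only
        rw [norm_mul]
        refine mul_le_mul_of_nonneg_right ((hexp ζ x).trans ?_) (norm_nonneg _)
        exact Real.exp_le_exp.mpr
          (mul_le_mul_of_nonneg_right (hball ζ hζ) (norm_nonneg _))
      have h2 : r * |t x| ≤ (r / c) * Real.exp (c * ‖x‖) := by
        have h3 : c * ‖x‖ ≤ Real.exp (c * ‖x‖) := by
          linarith [Real.add_one_le_exp (c * ‖x‖)]
        have h4 : |t x| ≤ ‖x‖ := htle x
        rw [div_mul_eq_mul_div, le_div_iff₀ hcpos]
        nlinarith [mul_le_mul_of_nonneg_left h4 hr.le,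
          mul_le_mul_of_nonneg_left h3 hr.le, hcpos.le]
      calc r * |t x| * ‖F ζ x‖
          ≤ ((r / c) * Real.exp (c * ‖x‖)) * (Real.exp ((lam - c) * ‖x‖) * ‖v x‖) := by
            refine mul_le_mul h2 h1 (norm_nonneg _) ?_
            positivity
        _ = (r / c) * (Real.exp (c * ‖x‖) * Real.exp ((lam - c) * ‖x‖) * ‖v x‖) := by ring
        _ = (r / c) * (Real.exp (lam * ‖x‖) * ‖v x‖) := by
            rw [← Real.exp_add]; ring_nf
    · -- HasDerivAt
      intro ζ hζ
      have h1 : HasDerivAt (fun ζ : ℂ => Complex.I * (ζ * ((r * t x : ℝ) : ℂ)))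
          (Complex.I * ((r * t x : ℝ) : ℂ)) ζ := by
        simpa using ((hasDerivAt_id ζ).mul_const ((r * t x : ℝ) : ℂ)).const_mul Complex.I
      have h2 := (h1.cexp).mul_const (v x)
      rw [hF', hF]; dsimp only
      exact h2.congr_deriv (by ring)
  · -- agrees with FT on real points
    intro s _
    rw [hg]; dsimp only
    unfold FT
    congr 1
    refine integral_congr_ae (Filter.Eventually.of_forall fun x => ?_)
    rw [hF]; dsimp only
    congr 2
    rw [real_inner_smul_left]
    push_cast
    ring
  · -- the bound
    intro ζ hζ
    have hlam' := (him ζ hζ).le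
    rw [hg]; dsimp only
    rw [norm_mul, Complex.norm_real, Real.norm_eq_abs]
    have hpos : (0:ℝ) < (2 * π) ^ d := by positivity
    rw [abs_of_pos (inv_pos.mpr hpos)]
    unfold Qv
    refine mul_le_mul_of_nonneg_left ?_ (inv_pos.mpr hpos).le
    calc ‖∫ x : Ed d, F ζ x‖ ≤ ∫ x : Ed d, ‖F ζ x‖ := norm_integral_le_integral_norm _
      _ ≤ ∫ x : Ed d, Real.exp (lam * ‖x‖) * ‖v x‖ := by
          exact integral_mono (hint ζ hlam').norm hQ (fun x => hbd ζ hlam' x)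


end
end

section
/- Let d ≥ 1, r > 0, ε > 0, let m > 0 be an integer, and let α ∈ (0, 1/2). Then there exist constants C > 0 and K > 0 such that for every k ∈ ℝ^d with |k| ≥ K, sup_{ξ ∈ B_r} |ℱv_{k,m,ε}(ξ)| ≤ C exp(−α|k|²). -/
open MeasureTheory Real

noncomputable section

/-- Gaussian Fourier integral in our convention. -/
lemma gauss_int_aux {d : ℕ} (η : Ed d) :
    ∫ x : Ed d, Complex.exp (Complex.I * ((inner ℝ η x : ℝ) : ℂ) - (‖x‖ : ℂ) ^ 2 / 2)
      = (2 * π : ℂ) ^ ((d : ℂ) / 2) * Complex.exp (-(‖η‖ : ℂ) ^ 2 / 2) := by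
  have h := GaussianFourier.integral_cexp_neg_mul_sq_norm_add (V := Ed d) (b := (1/2 : ℂ))
    (by norm_num) Complex.I η
  rw [finrank_euclideanSpace_fin] at h
  have e1 : ∀ x : Ed d, Complex.I * ((inner ℝ η x : ℝ) : ℂ) - (‖x‖ : ℂ) ^ 2 / 2
      = -(1/2 : ℂ) * ‖x‖ ^ 2 + Complex.I * ((inner ℝ η x : ℝ) : ℂ) := by
    intro x; ring
  simp_rw [e1]
  rw [h]
  congr 1
  · congr 1; ring
  · congr 1
    rw [Complex.I_sq]
    ring

lemma integrable_gauss_aux {d : ℕ} (η : Ed d) :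
    Integrable (fun x : Ed d =>
      Complex.exp (Complex.I * ((inner ℝ η x : ℝ) : ℂ) - (‖x‖ : ℂ) ^ 2 / 2)) := by
  have h := GaussianFourier.integrable_cexp_neg_mul_sq_norm_add (V := Ed d) (b := (1/2 : ℂ))
    (by norm_num) Complex.I η
  convert h using 2 with x
  ring

lemma FT_vkme_aux {d : ℕ} (k : Ed d) (m : ℕ) (ε : ℝ) (ξ : Ed d) :
    FT (vkme k m ε) ξ = ((((2 * π) ^ d)⁻¹ : ℝ) : ℂ) * (((ε * (‖k‖ ^ m)⁻¹ : ℝ) : ℂ) / 2)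
      * (2 * π : ℂ) ^ ((d : ℂ) / 2)
      * (Complex.exp (-(‖ξ + k‖ : ℂ) ^ 2 / 2) + Complex.exp (-(‖ξ - k‖ : ℂ) ^ 2 / 2)) := by
  have key : ∀ x : Ed d, Complex.exp (Complex.I * ((inner ℝ ξ x : ℝ) : ℂ)) * vkme k m ε x
      = (((ε * (‖k‖ ^ m)⁻¹ : ℝ) : ℂ) / 2) *
        (Complex.exp (Complex.I * ((inner ℝ (ξ + k) x : ℝ) : ℂ) - (‖x‖ : ℂ) ^ 2 / 2)
         + Complex.exp (Complex.I * ((inner ℝ (ξ - k) x : ℝ) : ℂ) - (‖x‖ : ℂ) ^ 2 / 2)) := by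
    intro x
    simp only [vkme, inner_add_left, inner_sub_left]
    push_cast [Complex.ofReal_exp, Complex.ofReal_cos]
    rw [Complex.cos]
    simp only [sub_eq_add_neg, mul_add, Complex.exp_add, neg_add, neg_div, neg_neg, mul_neg]
    ring_nf
  unfold FT
  simp_rw [key]
  rw [integral_const_mul, integral_add (integrable_gauss_aux (ξ + k)) (integrable_gauss_aux (ξ - k)),
    gauss_int_aux, gauss_int_aux]
  ring

lemma exp_bound_aux (r α t s : ℝ) (hr : 0 < r) (hα0 : 0 < α) (hα2 : α < 1 / 2)
    (hk1 : r ≤ t) (hk2 : r / (1/2 - α) ≤ t) (hs : 0 ≤ s) (h1 : t - r ≤ s) :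
    ‖Complex.exp (-(s : ℂ) ^ 2 / 2)‖ ≤ Real.exp (-α * t ^ 2) := by
  have h2 : 2 * α * t ^ 2 ≤ s ^ 2 := by
    have h3 : (t - r) ^ 2 ≤ s ^ 2 := by
      apply sq_le_sq' <;> nlinarith
    have h4 : r ≤ (1/2 - α) * t := by
      have hpos : (0:ℝ) < 1/2 - α := by linarith
      calc r = r / (1/2 - α) * (1/2 - α) := (div_mul_cancel₀ r hpos.ne').symm
        _ ≤ t * (1/2 - α) := mul_le_mul_of_nonneg_right hk2 hpos.le
        _ = (1/2 - α) * t := mul_comm _ _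
    nlinarith
  have : ‖Complex.exp (-(s : ℂ) ^ 2 / 2)‖ = Real.exp (-(s ^ 2) / 2) := by
    rw [Complex.norm_exp]
    norm_num [← Complex.ofReal_pow]
  rw [this]
  apply Real.exp_le_exp.2
  linarith

lemma cpow_norm_aux (d : ℕ) : ‖(2 * (π : ℂ)) ^ ((d : ℂ) / 2)‖ = (2 * π) ^ ((d : ℝ) / 2) := by
  rw [show (2 * (π : ℂ)) = ((2 * π : ℝ) : ℂ) by push_cast; ring, Complex.norm_cpow_eq_rpow_re_of_pos (by positivity)]
  norm_num

lemma const_le_one_aux (d : ℕ) : ((2 * π) ^ d)⁻¹ * (2 * π) ^ ((d : ℝ) / 2) ≤ 1 := by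
  rw [← Real.rpow_natCast (2 * π) d, ← Real.rpow_neg (by positivity),
    ← Real.rpow_add (by positivity)]
  apply Real.rpow_le_one_of_one_le_of_nonpos
  · nlinarith [Real.pi_gt_three]
  · linarith [Nat.cast_nonneg (α := ℝ) d]

/-- Gaussian decay of ℱv_{k,m,ε} on B_r as |k| → ∞. -/
theorem vkme_FT_decay {d : ℕ} (hd : 1 ≤ d) (r ε : ℝ) (hr : 0 < r) (hε : 0 < ε)
    (m : ℕ) (hm : 0 < m) (α : ℝ) (hα0 : 0 < α) (hα2 : α < 1 / 2) :
    ∃ C K : ℝ, 0 < C ∧ 0 < K ∧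
      ∀ k : Ed d, K ≤ ‖k‖ →
        supNormOn (ball d r) (FT (vkme k m ε)) ≤ C * Real.exp (-α * ‖k‖ ^ 2) := by
  refine ⟨ε, max 1 (max r (r / (1/2 - α))), hε, lt_of_lt_of_le one_pos (le_max_left _ _), ?_⟩
  intro k hk
  have hk1 : 1 ≤ ‖k‖ := le_trans (le_max_left _ _) hk
  have hkr : r ≤ ‖k‖ := le_trans ((le_max_left _ _).trans (le_max_right _ _)) hk
  have hk2 : r / (1/2 - α) ≤ ‖k‖ := le_trans ((le_max_right _ _).trans (le_max_right _ _)) hk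
  unfold supNormOn
  apply Real.iSup_le _ (by positivity)
  intro ξ
  apply Real.iSup_le _ (by positivity)
  intro hξ
  have hξr : ‖ξ‖ < r := hξ
  rw [FT_vkme_aux]
  rw [norm_mul, norm_mul, norm_mul, cpow_norm_aux]
  have hd1 : ‖((((2 * π) ^ d)⁻¹ : ℝ) : ℂ)‖ = ((2 * π) ^ d)⁻¹ := by
    rw [Complex.norm_real, Real.norm_eq_abs, abs_of_nonneg (by positivity)]
  have hd2 : ‖(((ε * (‖k‖ ^ m)⁻¹ : ℝ) : ℂ)) / 2‖ = ε * (‖k‖ ^ m)⁻¹ / 2 := by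
    rw [norm_div, Complex.norm_real, Real.norm_eq_abs, abs_of_nonneg (by positivity)]
    norm_num
  rw [hd1, hd2]
  have hE : ‖Complex.exp (-(‖ξ + k‖ : ℂ) ^ 2 / 2) + Complex.exp (-(‖ξ - k‖ : ℂ) ^ 2 / 2)‖
      ≤ 2 * Real.exp (-α * ‖k‖ ^ 2) := by
    have hp : ‖k‖ - r ≤ ‖ξ + k‖ := by
      have h := norm_sub_norm_le k (-ξ)
      simp only [norm_neg, sub_neg_eq_add] at h
      rw [add_comm]
      linarith
    have hm : ‖k‖ - r ≤ ‖ξ - k‖ := by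
      have h := norm_sub_norm_le k ξ
      rw [norm_sub_rev]
      linarith
    calc ‖Complex.exp (-(‖ξ + k‖ : ℂ) ^ 2 / 2) + Complex.exp (-(‖ξ - k‖ : ℂ) ^ 2 / 2)‖
        ≤ ‖Complex.exp (-(‖ξ + k‖ : ℂ) ^ 2 / 2)‖ + ‖Complex.exp (-(‖ξ - k‖ : ℂ) ^ 2 / 2)‖ :=
          norm_add_le _ _
      _ ≤ Real.exp (-α * ‖k‖ ^ 2) + Real.exp (-α * ‖k‖ ^ 2) := by
          gcongr
          · exact exp_bound_aux r α ‖k‖ _ hr hα0 hα2 hkr hk2 (norm_nonneg _) hp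
          · exact exp_bound_aux r α ‖k‖ _ hr hα0 hα2 hkr hk2 (norm_nonneg _) hm
      _ = 2 * Real.exp (-α * ‖k‖ ^ 2) := by ring
  have hQ : (‖k‖ ^ m)⁻¹ ≤ 1 := by
    rw [inv_le_one_iff₀]
    right
    exact one_le_pow₀ hk1
  have hP := const_le_one_aux d
  calc ((2 * π) ^ d)⁻¹ * (ε * (‖k‖ ^ m)⁻¹ / 2) * (2 * π) ^ ((d : ℝ) / 2)
        * ‖Complex.exp (-(‖ξ + k‖ : ℂ) ^ 2 / 2) + Complex.exp (-(‖ξ - k‖ : ℂ) ^ 2 / 2)‖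
      ≤ ((2 * π) ^ d)⁻¹ * (ε * (‖k‖ ^ m)⁻¹ / 2) * (2 * π) ^ ((d : ℝ) / 2)
        * (2 * Real.exp (-α * ‖k‖ ^ 2)) := by
        gcongr
    _ = (((2 * π) ^ d)⁻¹ * (2 * π) ^ ((d : ℝ) / 2)) * (ε * (‖k‖ ^ m)⁻¹)
        * Real.exp (-α * ‖k‖ ^ 2) := by ring
    _ ≤ 1 * (ε * 1) * Real.exp (-α * ‖k‖ ^ 2) := by
        have h1 : (((2 * π) ^ d)⁻¹ * (2 * π) ^ ((d : ℝ) / 2)) * (ε * (‖k‖ ^ m)⁻¹)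
            ≤ 1 * (ε * 1) := by
          apply mul_le_mul hP ?_ (by positivity) one_pos.le
          exact mul_le_mul_of_nonneg_left hQ hε.le
        exact mul_le_mul_of_nonneg_right h1 (Real.exp_pos _).le
    _ = ε * Real.exp (-α * ‖k‖ ^ 2) := by ring


end
end

section
/- Let d ≥ 1, r > 0, ε > 0, let m > 0 be an integer, and let β₁ > m/2 and c₁ > 0. Then there exists K > 0 such that for every k ∈ ℝ^d with |k| ≥ K, ‖v_{k,m,ε}‖_{L^∞(ℝ^d)} > c₁ (ln(3 + ‖ℱv_{k,m,ε}‖_{L^∞(B_r)}^{−1}))^{−β₁}; here ‖v_{k,m,ε}‖_{L^∞(ℝ^d)} = ε|k|^{−m}. -/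
open MeasureTheory Real

set_option maxHeartbeats 1000000

noncomputable section

section AuxVkme

lemma vkme_pointwise {d : ℕ} (k ξ : Ed d) (m : ℕ) (ε : ℝ) (x : Ed d) :
    Complex.exp (Complex.I * ((inner ℝ ξ x : ℝ) : ℂ)) * vkme k m ε x
    = (((ε * (‖k‖ ^ m)⁻¹ / 2 : ℝ)) : ℂ) *
      (Complex.exp (-(1/2 : ℂ) * ‖x‖^2 + Complex.I * ((inner ℝ (ξ + k) x : ℝ) : ℂ))
       + Complex.exp (-(1/2 : ℂ) * ‖x‖^2 + Complex.I * ((inner ℝ (ξ - k) x : ℝ) : ℂ))) := by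
  rw [vkme, inner_add_left, inner_sub_left]
  push_cast
  set s := ((inner ℝ ξ x : ℝ) : ℂ)
  set t := ((inner ℝ k x : ℝ) : ℂ)
  set n := ((‖x‖ : ℝ) : ℂ)
  rw [Complex.exp_add, Complex.exp_add, show -(1/2 : ℂ) * n^2 = -n^2/2 from by ring,
    show Complex.I * (s + t) = (Complex.I * s) + t * Complex.I from by ring,
    show Complex.I * (s - t) = (Complex.I * s) + -(t * Complex.I) from by ring,
    Complex.exp_add, Complex.exp_add, Complex.exp_neg, Complex.cos,
    show -t * Complex.I = -(t * Complex.I) from by ring, Complex.exp_neg]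
  field_simp [Complex.exp_ne_zero]

lemma FT_vkme {d : ℕ} (k : Ed d) (m : ℕ) (ε : ℝ) (ξ : Ed d) :
    FT (vkme k m ε) ξ =
      ((((2 * π) ^ d)⁻¹ * (ε * (‖k‖ ^ m)⁻¹ / 2) * (2 * π) ^ ((d : ℝ) / 2) *
        (Real.exp (-‖ξ + k‖ ^ 2 / 2) + Real.exp (-‖ξ - k‖ ^ 2 / 2)) : ℝ) : ℂ) := by
  have hb : (0 : ℝ) < ((1:ℂ)/2).re := by norm_num
  have hint : ∀ w : Ed d, Integrable (fun x : Ed d =>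
      Complex.exp (-(1/2 : ℂ) * ‖x‖^2 + Complex.I * ((inner ℝ w x : ℝ) : ℂ))) := by
    intro w
    simpa using GaussianFourier.integrable_cexp_neg_mul_sq_norm_add (b := (1:ℂ)/2) hb Complex.I w
  have hval : ∀ w : Ed d, (∫ x : Ed d, Complex.exp (-(1/2 : ℂ) * ‖x‖^2
      + Complex.I * ((inner ℝ w x : ℝ) : ℂ)))
      = (((2 * π) ^ ((d : ℝ)/2) : ℝ) : ℂ) * ((Real.exp (-‖w‖^2/2) : ℝ) : ℂ) := by
    intro w
    have := GaussianFourier.integral_cexp_neg_mul_sq_norm_add (b := (1:ℂ)/2) hb Complex.I w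
    simp only [finrank_euclideanSpace, Fintype.card_fin] at this
    rw [show (fun x : Ed d => Complex.exp (-(1/2 : ℂ) * ‖x‖^2 + Complex.I * ((inner ℝ w x : ℝ) : ℂ)))
        = fun x : Ed d => Complex.exp (-((1:ℂ)/2) * ‖x‖^2 + Complex.I * ((inner ℝ w x : ℝ) : ℂ)) from by
      norm_num, this]
    have h1 : (↑π / ((1:ℂ)/2)) = ((2 * π : ℝ) : ℂ) := by push_cast; field_simp
    have h2 : (Complex.I ^ 2 * (‖w‖:ℂ)^2 / (4 * ((1:ℂ)/2))) = ((-‖w‖^2/2 : ℝ) : ℂ) := by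
      rw [Complex.I_sq]; push_cast; ring
    rw [h1, h2, ← Complex.ofReal_exp]
    congr 1
    rw [Complex.ofReal_cpow (by positivity)]
    congr 1
    push_cast
    ring
  rw [FT]
  rw [show (∫ x : Ed d, Complex.exp (Complex.I * ((inner ℝ ξ x : ℝ) : ℂ)) * vkme k m ε x)
      = ∫ x : Ed d, (((ε * (‖k‖ ^ m)⁻¹ / 2 : ℝ)) : ℂ) *
        (Complex.exp (-(1/2 : ℂ) * ‖x‖^2 + Complex.I * ((inner ℝ (ξ + k) x : ℝ) : ℂ))
         + Complex.exp (-(1/2 : ℂ) * ‖x‖^2 + Complex.I * ((inner ℝ (ξ - k) x : ℝ) : ℂ)))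
      from integral_congr_ae (Filter.Eventually.of_forall (vkme_pointwise k ξ m ε))]
  rw [MeasureTheory.integral_const_mul, integral_add (hint (ξ + k)) (hint (ξ - k)), hval, hval]
  push_cast
  ring

lemma supNormOn_le' {d : ℕ} {S : Set (Ed d)} {f : Ed d → ℂ} {a : ℝ} (ha : 0 ≤ a)
    (hub : ∀ ξ ∈ S, ‖f ξ‖ ≤ a) : supNormOn S f ≤ a :=
  Real.iSup_le (fun ξ => Real.iSup_le (fun h => hub ξ h) ha) ha

lemma le_supNormOn' {d : ℕ} {S : Set (Ed d)} {f : Ed d → ℂ} {a : ℝ} (ha : 0 ≤ a)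
    (hub : ∀ ξ ∈ S, ‖f ξ‖ ≤ a) {x₀ : Ed d} (hx₀ : x₀ ∈ S) : ‖f x₀‖ ≤ supNormOn S f := by
  have hb : BddAbove (Set.range fun ξ => ⨆ _ : ξ ∈ S, ‖f ξ‖) := by
    refine ⟨a, ?_⟩
    rintro _ ⟨ξ, rfl⟩
    exact Real.iSup_le (fun h => hub ξ h) ha
  refine le_trans ?_ (le_ciSup hb x₀)
  simp [hx₀]

end AuxVkme

/-- Instability estimate (4.7) in the L^∞ norm. -/
theorem vkme_instability_Linfty {d : ℕ} (hd : 1 ≤ d) (r ε : ℝ) (hr : 0 < r) (hε : 0 < ε)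
    (m : ℕ) (hm : 0 < m) (β₁ c₁ : ℝ) (hβ : (m : ℝ) / 2 < β₁) (hc : 0 < c₁) :
    ∃ K : ℝ, 0 < K ∧
      ∀ k : Ed d, K ≤ ‖k‖ →
        supNormOn Set.univ (vkme k m ε) = ε * (‖k‖ ^ m)⁻¹ ∧
        supNormOn Set.univ (vkme k m ε) >
          c₁ * Real.log (3 + (supNormOn (ball d r) (FT (vkme k m ε)))⁻¹) ^ (-β₁) := by
  classical
  have hπ : (1:ℝ) ≤ 2 * π := by nlinarith [Real.pi_gt_three]
  have hm1 : (1:ℝ) ≤ (m:ℝ) := by exact_mod_cast hm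
  set α : ℝ := 2 * β₁ - (m:ℝ) with hα
  have hα0 : 0 < α := by rw [hα]; linarith
  have hβ0 : 0 < β₁ := by linarith
  set K₅ : ℝ := (max 1 (c₁ * 16 ^ β₁ / ε + 1)) ^ α⁻¹ with hK₅
  set K : ℝ := max (max 1 (2 * r)) (max (4 * (1 + |Real.log ε|)) K₅) with hK
  have hK1 : (1:ℝ) ≤ K := le_trans (le_max_left 1 (2*r)) (le_max_left _ _)
  refine ⟨K, lt_of_lt_of_le one_pos hK1, ?_⟩
  intro k hk
  have hu1 : 1 ≤ ‖k‖ := le_trans (le_trans (le_max_left _ _) (le_max_left _ _)) hk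
  have h2r : 2 * r ≤ ‖k‖ := le_trans (le_trans (le_max_right _ _) (le_max_left _ _)) hk
  have hlog : 4 * (1 + |Real.log ε|) ≤ ‖k‖ :=
    le_trans (le_trans (le_max_left _ _) (le_max_right _ _)) hk
  have hK5 : K₅ ≤ ‖k‖ := le_trans (le_trans (le_max_right _ _) (le_max_right _ _)) hk
  have hu0 : 0 < ‖k‖ := lt_of_lt_of_le one_pos hu1
  have ha0 : 0 < ε * (‖k‖ ^ m)⁻¹ := by positivity
  -- part 1
  have hvb : ∀ x : Ed d, ‖vkme k m ε x‖ ≤ ε * (‖k‖ ^ m)⁻¹ := by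
    intro x
    rw [vkme, Complex.norm_real, Real.norm_eq_abs]
    have h1 : |Real.cos (inner ℝ k x : ℝ)| ≤ 1 := Real.abs_cos_le_one _
    have h2 : Real.exp (-(‖x‖^2)/2) ≤ 1 := Real.exp_le_one_iff.mpr
      (by rw [neg_div]; exact neg_nonpos.mpr (by positivity))
    have h3 : |ε * (‖k‖ ^ m)⁻¹ * Real.exp (-(‖x‖^2)/2) * Real.cos (inner ℝ k x : ℝ)|
        = (ε * (‖k‖ ^ m)⁻¹ * Real.exp (-(‖x‖^2)/2)) * |Real.cos (inner ℝ k x : ℝ)| := by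
      rw [abs_mul, abs_of_nonneg (by positivity : (0:ℝ) ≤ ε * (‖k‖ ^ m)⁻¹ * Real.exp (-(‖x‖^2)/2))]
    rw [h3]
    calc (ε * (‖k‖ ^ m)⁻¹ * Real.exp (-(‖x‖^2)/2)) * |Real.cos (inner ℝ k x : ℝ)|
        ≤ (ε * (‖k‖ ^ m)⁻¹ * Real.exp (-(‖x‖^2)/2)) * 1 :=
          mul_le_mul_of_nonneg_left h1 (by positivity)
      _ = ε * (‖k‖ ^ m)⁻¹ * Real.exp (-(‖x‖^2)/2) := mul_one _
      _ ≤ (ε * (‖k‖ ^ m)⁻¹) * 1 := mul_le_mul_of_nonneg_left h2 ha0.le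
      _ = ε * (‖k‖ ^ m)⁻¹ := mul_one _
  have hv0 : ‖vkme k m ε 0‖ = ε * (‖k‖ ^ m)⁻¹ := by
    have hv : vkme k m ε 0 = ((ε * (‖k‖ ^ m)⁻¹ : ℝ) : ℂ) := by
      rw [vkme]
      norm_num [inner_zero_right, Real.exp_zero, Real.cos_zero]
    rw [hv, Complex.norm_real, Real.norm_eq_abs, abs_of_nonneg ha0.le]
  have hpart1 : supNormOn Set.univ (vkme k m ε) = ε * (‖k‖ ^ m)⁻¹ := by
    apply le_antisymm
    · exact supNormOn_le' ha0.le (fun ξ _ => hvb ξ)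
    · rw [← hv0]
      exact le_supNormOn' ha0.le (fun ξ _ => hvb ξ) (Set.mem_univ 0)
  refine ⟨hpart1, ?_⟩
  -- norm formula for FT
  have hnorm : ∀ ξ : Ed d, ‖FT (vkme k m ε) ξ‖ =
      ((2 * π) ^ d)⁻¹ * (ε * (‖k‖ ^ m)⁻¹ / 2) * (2 * π) ^ ((d : ℝ) / 2) *
        (Real.exp (-‖ξ + k‖ ^ 2 / 2) + Real.exp (-‖ξ - k‖ ^ 2 / 2)) := by
    intro ξ
    rw [FT_vkme, Complex.norm_real, Real.norm_eq_abs, abs_of_nonneg (by positivity)]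
  have hC2 : ((2 * π) ^ d)⁻¹ * (2 * π) ^ ((d : ℝ) / 2) ≤ 1 := by
    rw [← Real.rpow_natCast (2 * π) d, ← Real.rpow_neg (by positivity),
      ← Real.rpow_add (by positivity)]
    refine Real.rpow_le_one_of_one_le_of_nonpos hπ ?_
    have : (0:ℝ) ≤ (d:ℝ) := Nat.cast_nonneg d
    linarith
  have hbinv : ((‖k‖ ^ m : ℝ))⁻¹ ≤ 1 := inv_le_one_of_one_le₀ (one_le_pow₀ hu1)
  have hCε : ((2 * π) ^ d)⁻¹ * (ε * (‖k‖ ^ m)⁻¹ / 2) * (2 * π) ^ ((d : ℝ) / 2) * 2 ≤ ε := by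
    have h1 : ((2 * π) ^ d)⁻¹ * (ε * (‖k‖ ^ m)⁻¹ / 2) * (2 * π) ^ ((d : ℝ) / 2) * 2
        = (((2 * π) ^ d)⁻¹ * (2 * π) ^ ((d : ℝ) / 2)) * (ε * (‖k‖ ^ m)⁻¹) := by ring
    rw [h1]
    calc (((2 * π) ^ d)⁻¹ * (2 * π) ^ ((d : ℝ) / 2)) * (ε * (‖k‖ ^ m)⁻¹)
        ≤ 1 * (ε * (‖k‖ ^ m)⁻¹) := mul_le_mul_of_nonneg_right hC2 (by positivity)
      _ = ε * (‖k‖ ^ m)⁻¹ := one_mul _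
      _ ≤ ε * 1 := mul_le_mul_of_nonneg_left hbinv hε.le
      _ = ε := mul_one ε
  have hub : ∀ ξ ∈ ball d r, ‖FT (vkme k m ε) ξ‖ ≤ ε * Real.exp (-(‖k‖^2)/8) := by
    intro ξ hξ
    have hξr : ‖ξ‖ < r := hξ
    have hp : ‖k‖ / 2 ≤ ‖ξ + k‖ := by
      have h := norm_sub_norm_le k (-ξ)
      rw [sub_neg_eq_add, norm_neg] at h
      rw [show ξ + k = k + ξ from add_comm ξ k]
      linarith
    have hq : ‖k‖ / 2 ≤ ‖ξ - k‖ := by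
      have h := norm_sub_norm_le k ξ
      rw [norm_sub_rev] at h
      linarith
    have he1 : Real.exp (-‖ξ + k‖ ^ 2 / 2) ≤ Real.exp (-(‖k‖^2)/8) :=
      Real.exp_le_exp.mpr (by nlinarith [norm_nonneg (ξ + k), norm_nonneg k])
    have he2 : Real.exp (-‖ξ - k‖ ^ 2 / 2) ≤ Real.exp (-(‖k‖^2)/8) :=
      Real.exp_le_exp.mpr (by nlinarith [norm_nonneg (ξ - k), norm_nonneg k])
    rw [hnorm ξ]
    calc ((2 * π) ^ d)⁻¹ * (ε * (‖k‖ ^ m)⁻¹ / 2) * (2 * π) ^ ((d : ℝ) / 2) *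
          (Real.exp (-‖ξ + k‖ ^ 2 / 2) + Real.exp (-‖ξ - k‖ ^ 2 / 2))
        ≤ ((2 * π) ^ d)⁻¹ * (ε * (‖k‖ ^ m)⁻¹ / 2) * (2 * π) ^ ((d : ℝ) / 2) *
          (Real.exp (-(‖k‖^2)/8) + Real.exp (-(‖k‖^2)/8)) := by
          apply mul_le_mul_of_nonneg_left (by linarith) (by positivity)
      _ = (((2 * π) ^ d)⁻¹ * (ε * (‖k‖ ^ m)⁻¹ / 2) * (2 * π) ^ ((d : ℝ) / 2) * 2) *
          Real.exp (-(‖k‖^2)/8) := by ring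
      _ ≤ ε * Real.exp (-(‖k‖^2)/8) := mul_le_mul_of_nonneg_right hCε (Real.exp_pos _).le
  have hubε : ∀ ξ ∈ ball d r, ‖FT (vkme k m ε) ξ‖ ≤ ε := by
    intro ξ hξ
    refine le_trans (hub ξ hξ) ?_
    have h1 : Real.exp (-(‖k‖^2)/8) ≤ 1 := Real.exp_le_one_iff.mpr
      (by rw [neg_div]; exact neg_nonpos.mpr (by positivity))
    calc ε * Real.exp (-(‖k‖^2)/8) ≤ ε * 1 := mul_le_mul_of_nonneg_left h1 hε.le
      _ = ε := mul_one ε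
  have h0mem : (0 : Ed d) ∈ ball d r := by
    show ‖(0 : Ed d)‖ < r
    simpa using hr
  set S := supNormOn (ball d r) (FT (vkme k m ε)) with hSdef
  have hS0 : 0 < S := by
    have h := le_supNormOn' hε.le hubε h0mem
    have h2 : 0 < ‖FT (vkme k m ε) 0‖ := by
      rw [hnorm 0, zero_add, zero_sub, norm_neg]
      positivity
    linarith
  have hSle : S ≤ ε * Real.exp (-(‖k‖^2)/8) := supNormOn_le' (by positivity) hub
  have hSinv : ε⁻¹ * Real.exp ((‖k‖^2)/8) ≤ S⁻¹ := by
    calc ε⁻¹ * Real.exp ((‖k‖^2)/8) = (ε * Real.exp (-(‖k‖^2)/8))⁻¹ := by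
          rw [mul_inv, ← Real.exp_neg, show -(-(‖k‖^2)/8) = ‖k‖^2/8 from by ring]
      _ ≤ S⁻¹ := inv_anti₀ hS0 hSle
  have hL : ‖k‖^2/16 ≤ Real.log (3 + S⁻¹) := by
    have hS1 : 0 < S⁻¹ := inv_pos.mpr hS0
    have h1 : Real.log (ε⁻¹ * Real.exp ((‖k‖^2)/8)) ≤ Real.log (3 + S⁻¹) :=
      Real.log_le_log (by positivity) (by linarith)
    rw [Real.log_mul (by positivity) (Real.exp_ne_zero _), Real.log_inv, Real.log_exp] at h1
    have hcond : Real.log ε ≤ ‖k‖^2/16 := by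
      have h2 := le_abs_self (Real.log ε)
      have h3 := abs_nonneg (Real.log ε)
      nlinarith [norm_nonneg k]
    linarith
  have hT0 : 0 < ‖k‖^2/16 := by positivity
  have hA : Real.log (3 + S⁻¹) ^ (-β₁) ≤ (‖k‖^2/16) ^ (-β₁) :=
    Real.rpow_le_rpow_of_nonpos hT0 hL (by linarith)
  have hKey : c₁ * 16 ^ β₁ < ε * ‖k‖ ^ α := by
    have h2 : K₅ ^ α ≤ ‖k‖ ^ α := Real.rpow_le_rpow (by positivity) hK5 hα0.le
    rw [hK₅, Real.rpow_inv_rpow (by positivity) hα0.ne'] at h2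
    have h3 : c₁ * 16 ^ β₁ / ε + 1 ≤ ‖k‖ ^ α := le_trans (le_max_right _ _) h2
    have h4 : c₁ * 16 ^ β₁ / ε < ‖k‖ ^ α := by linarith
    calc c₁ * 16 ^ β₁ = ε * (c₁ * 16 ^ β₁ / ε) := by field_simp
      _ < ε * ‖k‖ ^ α := mul_lt_mul_of_pos_left h4 hε
  have hB : c₁ * (‖k‖^2/16) ^ (-β₁) < ε * (‖k‖ ^ m)⁻¹ := by
    have e1 : ((‖k‖^2/16 : ℝ)) ^ (-β₁) = 16 ^ β₁ * (‖k‖ ^ (2*β₁))⁻¹ := by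
      rw [Real.rpow_neg (by positivity), Real.div_rpow (by positivity) (by norm_num),
        inv_div, div_eq_mul_inv, ← Real.rpow_natCast ‖k‖ 2, ← Real.rpow_mul hu0.le]
      norm_num
    have e2 : ((‖k‖ ^ m : ℝ))⁻¹ = (‖k‖ ^ ((m:ℝ)))⁻¹ := by rw [Real.rpow_natCast]
    have e3 : ‖k‖ ^ α * (‖k‖ ^ (2*β₁))⁻¹ = (‖k‖ ^ ((m:ℝ)))⁻¹ := by
      rw [← Real.rpow_neg hu0.le, ← Real.rpow_add hu0, ← Real.rpow_neg hu0.le]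
      congr 1
      rw [hα]; ring
    rw [e1, e2]
    calc c₁ * (16 ^ β₁ * (‖k‖ ^ (2*β₁))⁻¹) = (c₁ * 16 ^ β₁) * (‖k‖ ^ (2*β₁))⁻¹ := by ring
      _ < (ε * ‖k‖ ^ α) * (‖k‖ ^ (2*β₁))⁻¹ := mul_lt_mul_of_pos_right hKey (by positivity)
      _ = ε * (‖k‖ ^ α * (‖k‖ ^ (2*β₁))⁻¹) := by ring
      _ = ε * (‖k‖ ^ ((m:ℝ)))⁻¹ := by rw [e3]
  rw [hpart1]
  calc c₁ * Real.log (3 + S⁻¹) ^ (-β₁) ≤ c₁ * (‖k‖^2/16) ^ (-β₁) :=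
        mul_le_mul_of_nonneg_left hA hc.le
    _ < ε * (‖k‖ ^ m)⁻¹ := hB


end
end

section
/- Let d ≥ 1, r > 0, ε > 0, let m > 0 be an integer, and let β₂ > m/2 and c₂ > 0. Then there exists K > 0 such that for every k ∈ ℝ^d with |k| ≥ K, ‖v_{k,m,ε}‖_{L²(ℝ^d)} > c₂ (ln(3 + ‖ℱv_{k,m,ε}‖_{L^∞(B_r)}^{−1}))^{−β₂}. -/
open MeasureTheory Real

noncomputable section

open scoped RealInnerProductSpace

lemma gauss_pt {d : ℕ} (w : Ed d) (x : Ed d) :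
    Complex.exp (-(1/2 : ℂ) * ‖x‖ ^ 2 + Complex.I * ((inner ℝ w x : ℝ) : ℂ))
      = Complex.exp (Complex.I * ((inner ℝ w x : ℝ) : ℂ)) * ((Real.exp (-‖x‖ ^ 2 / 2) : ℝ) : ℂ) := by
  rw [Complex.exp_add, Complex.ofReal_exp, mul_comm]
  congr 2
  push_cast
  ring

lemma ft_vkme {d : ℕ} (k : Ed d) (m : ℕ) (ε : ℝ) (ξ : Ed d) :
    FT (vkme k m ε) ξ =
      ((((2 * π) ^ d)⁻¹ * (ε * (‖k‖ ^ m)⁻¹) * (2 * π) ^ ((d : ℝ) / 2) *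
        ((Real.exp (-‖ξ + k‖ ^ 2 / 2) + Real.exp (-‖ξ - k‖ ^ 2 / 2)) / 2) : ℝ) : ℂ) := by
  have hb : (0:ℝ) < (1/2 : ℂ).re := by norm_num
  have hpt : ∀ x : Ed d,
      Complex.exp (Complex.I * ((inner ℝ ξ x : ℝ) : ℂ)) * vkme k m ε x
        = ((ε * (‖k‖ ^ m)⁻¹ / 2 : ℝ) : ℂ) *
          (Complex.exp (-(1/2 : ℂ) * ‖x‖ ^ 2 + Complex.I * ((inner ℝ (ξ + k) x : ℝ) : ℂ))
            + Complex.exp (-(1/2 : ℂ) * ‖x‖ ^ 2 + Complex.I * ((inner ℝ (ξ - k) x : ℝ) : ℂ))) := by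
    intro x
    rw [gauss_pt, gauss_pt, inner_add_left, inner_sub_left, vkme]
    push_cast
    rw [show Complex.cos ((inner ℝ k x : ℝ) : ℂ)
        = (Complex.exp (((inner ℝ k x : ℝ) : ℂ) * Complex.I)
          + Complex.exp (-((inner ℝ k x : ℝ) : ℂ) * Complex.I)) / 2 by
      have := Complex.two_cos (((inner ℝ k x : ℝ) : ℂ))
      linear_combination this / 2]
    rw [show (((inner ℝ k x : ℝ) : ℂ) * Complex.I) = Complex.I * ((inner ℝ k x : ℝ) : ℂ) by ring,
        show (-((inner ℝ k x : ℝ) : ℂ) * Complex.I) = -(Complex.I * ((inner ℝ k x : ℝ) : ℂ)) by ring]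
    rw [mul_add Complex.I, Complex.exp_add, mul_sub Complex.I, sub_eq_add_neg, Complex.exp_add]
    ring
  rw [FT]
  rw [MeasureTheory.integral_congr_ae (Filter.Eventually.of_forall hpt)]
  rw [MeasureTheory.integral_const_mul]
  rw [MeasureTheory.integral_add
    (GaussianFourier.integrable_cexp_neg_mul_sq_norm_add hb Complex.I (ξ + k))
    (GaussianFourier.integrable_cexp_neg_mul_sq_norm_add hb Complex.I (ξ - k))]
  rw [GaussianFourier.integral_cexp_neg_mul_sq_norm_add hb Complex.I (ξ + k),
      GaussianFourier.integral_cexp_neg_mul_sq_norm_add hb Complex.I (ξ - k)]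
  have hfr : (Module.finrank ℝ (Ed d) : ℂ) = (d : ℂ) := by
    congr 1
    push_cast
    exact finrank_euclideanSpace_fin
  rw [hfr]
  have hpow : ((π : ℂ) / (1/2 : ℂ)) ^ ((d : ℂ) / 2)
      = (((2 * π) ^ ((d : ℝ) / 2) : ℝ) : ℂ) := by
    rw [Complex.ofReal_cpow (by positivity), show ((π : ℂ) / (1/2 : ℂ)) = ((2 * π : ℝ) : ℂ) by push_cast; ring]
    congr 1
    push_cast
    ring
  rw [hpow]
  have hexp : ∀ w : Ed d, Complex.exp (Complex.I ^ 2 * (‖w‖ : ℂ) ^ 2 / (4 * (1/2 : ℂ)))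
      = ((Real.exp (-‖w‖ ^ 2 / 2) : ℝ) : ℂ) := by
    intro w
    rw [Complex.ofReal_exp]
    congr 1
    rw [Complex.I_sq]
    push_cast
    ring
  rw [hexp, hexp]
  push_cast
  ring

lemma norm_ft_vkme {d : ℕ} (k : Ed d) (m : ℕ) {ε : ℝ} (hε : 0 < ε) (hk : k ≠ 0) (ξ : Ed d) :
    ‖FT (vkme k m ε) ξ‖ =
      ((2 * π) ^ d)⁻¹ * (ε * (‖k‖ ^ m)⁻¹) * (2 * π) ^ ((d : ℝ) / 2) *
        ((Real.exp (-‖ξ + k‖ ^ 2 / 2) + Real.exp (-‖ξ - k‖ ^ 2 / 2)) / 2) := by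
  rw [ft_vkme, Complex.norm_real, Real.norm_eq_abs, abs_of_nonneg]
  have : 0 < ‖k‖ := norm_pos_iff.mpr hk
  positivity

lemma sup_ft_le {d : ℕ} (r : ℝ) (hr : 0 < r) (k : Ed d) (m : ℕ) {ε : ℝ} (hε : 0 < ε)
    (hk : r ≤ ‖k‖) :
    supNormOn (ball d r) (FT (vkme k m ε)) ≤
      ((2 * π) ^ d)⁻¹ * (ε * (‖k‖ ^ m)⁻¹) * (2 * π) ^ ((d : ℝ) / 2) *
        Real.exp (-(‖k‖ - r) ^ 2 / 2) := by
  have hk0 : k ≠ 0 := by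
    intro h; rw [h, norm_zero] at hk; linarith
  have hkn : 0 < ‖k‖ := norm_pos_iff.mpr hk0
  have hU : 0 ≤ ((2 * π) ^ d)⁻¹ * (ε * (‖k‖ ^ m)⁻¹) * (2 * π) ^ ((d : ℝ) / 2) *
      Real.exp (-(‖k‖ - r) ^ 2 / 2) := by positivity
  apply Real.iSup_le _ hU
  intro ξ
  apply Real.iSup_le _ hU
  intro hξ
  rw [norm_ft_vkme k m hε hk0]
  have hb : ∀ w : Ed d, ‖k‖ - r ≤ ‖w‖ → Real.exp (-‖w‖ ^ 2 / 2) ≤ Real.exp (-(‖k‖ - r) ^ 2 / 2) := by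
    intro w hw
    apply Real.exp_le_exp.mpr
    have h1 : (‖k‖ - r) ^ 2 ≤ ‖w‖ ^ 2 := by
      rcases le_or_gt 0 (‖k‖ - r) with h | h
      · exact pow_le_pow_left₀ h hw 2
      · nlinarith [sq_nonneg ‖w‖]
    linarith
  have hξr : ‖ξ‖ < r := hξ
  have h1 : ‖k‖ - r ≤ ‖ξ + k‖ := by
    have := norm_add_le (ξ + k) (-ξ)
    simp only [add_neg_cancel_comm, norm_neg] at this
    linarith
  have h2 : ‖k‖ - r ≤ ‖ξ - k‖ := by
    have := norm_add_le (ξ - k) (-ξ)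
    have he : ξ - k + -ξ = -k := by abel
    rw [he, norm_neg, norm_neg] at this
    linarith
  have := hb _ h1
  have := hb _ h2
  have hC : 0 < ((2 * π) ^ d)⁻¹ * (ε * (‖k‖ ^ m)⁻¹) * (2 * π) ^ ((d : ℝ) / 2) := by positivity
  calc ((2 * π) ^ d)⁻¹ * (ε * (‖k‖ ^ m)⁻¹) * (2 * π) ^ ((d : ℝ) / 2) *
        ((Real.exp (-‖ξ + k‖ ^ 2 / 2) + Real.exp (-‖ξ - k‖ ^ 2 / 2)) / 2)
      ≤ ((2 * π) ^ d)⁻¹ * (ε * (‖k‖ ^ m)⁻¹) * (2 * π) ^ ((d : ℝ) / 2) *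
        Real.exp (-(‖k‖ - r) ^ 2 / 2) := by
        apply mul_le_mul_of_nonneg_left _ hC.le
        linarith

lemma sup_ft_pos {d : ℕ} (hd : 1 ≤ d) (r : ℝ) (hr : 0 < r) (k : Ed d) (m : ℕ) {ε : ℝ}
    (hε : 0 < ε) (hk : r ≤ ‖k‖) :
    0 < supNormOn (ball d r) (FT (vkme k m ε)) := by
  have hk0 : k ≠ 0 := by
    intro h; rw [h, norm_zero] at hk; linarith
  have hkn : 0 < ‖k‖ := norm_pos_iff.mpr hk0
  have hU0 : (0:ℝ) ≤ ((2 * π) ^ d)⁻¹ * (ε * (‖k‖ ^ m)⁻¹) * (2 * π) ^ ((d : ℝ) / 2) := by positivity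
  have hbdd : BddAbove (Set.range fun ξ : Ed d => ⨆ _ : ξ ∈ ball d r, ‖FT (vkme k m ε) ξ‖) := by
    refine ⟨((2 * π) ^ d)⁻¹ * (ε * (‖k‖ ^ m)⁻¹) * (2 * π) ^ ((d : ℝ) / 2), ?_⟩
    rintro y ⟨ξ, rfl⟩
    apply Real.iSup_le _ hU0
    intro hξ
    rw [norm_ft_vkme k m hε hk0]
    have e1 : Real.exp (-‖ξ + k‖ ^ 2 / 2) ≤ 1 := Real.exp_le_one_iff.mpr (by nlinarith [sq_nonneg ‖ξ + k‖, sq_nonneg ‖ξ - k‖])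
    have e2 : Real.exp (-‖ξ - k‖ ^ 2 / 2) ≤ 1 := Real.exp_le_one_iff.mpr (by nlinarith [sq_nonneg ‖ξ + k‖, sq_nonneg ‖ξ - k‖])
    have hC : 0 < ((2 * π) ^ d)⁻¹ * (ε * (‖k‖ ^ m)⁻¹) * (2 * π) ^ ((d : ℝ) / 2) := by positivity
    nlinarith
  have h0mem : (0 : Ed d) ∈ ball d r := by
    simp [ball, hr]
  have hle : ‖FT (vkme k m ε) (0 : Ed d)‖ ≤ supNormOn (ball d r) (FT (vkme k m ε)) := by
    have := le_ciSup hbdd (0 : Ed d)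
    rw [ciSup_pos h0mem] at this
    exact this
  refine lt_of_lt_of_le ?_ hle
  rw [norm_ft_vkme k m hε hk0]
  have : (0 : Ed d) + k = k := by simp
  positivity

lemma l2_vkme_ge {d : ℕ} (k : Ed d) (m : ℕ) {ε : ℝ} (hε : 0 < ε) (hk : k ≠ 0) :
    ε * (‖k‖ ^ m)⁻¹ * Real.sqrt (π ^ ((d : ℝ) / 2) / 2) ≤ L2Norm (vkme k m ε) := by
  have hkn : 0 < ‖k‖ := norm_pos_iff.mpr hk
  set c : ℝ := ε * (‖k‖ ^ m)⁻¹ with hc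
  have hcpos : 0 < c := by positivity
  have hb1 : (0:ℝ) < ((1:ℂ)).re := by norm_num
  set g : Ed d → ℂ := fun x =>
    Complex.exp (-(1:ℂ) * ‖x‖ ^ 2 + (2 * Complex.I) * ((inner ℝ k x : ℝ) : ℂ)) with hg
  have hgint : Integrable g := by
    exact GaussianFourier.integrable_cexp_neg_mul_sq_norm_add hb1 (2 * Complex.I) k
  have hfint : Integrable (fun x : Ed d => Real.exp (-1 * ‖x‖ ^ 2)) := by
    have h0 := (GaussianFourier.integrable_cexp_neg_mul_sq_norm_add hb1 (0:ℂ) (0:Ed d)).re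
    apply h0.congr
    filter_upwards with x
    simp [Complex.exp_re, ← Complex.ofReal_pow]
  have hpt : ∀ x : Ed d, ‖vkme k m ε x‖ ^ 2
      = c ^ 2 / 2 * (Real.exp (-1 * ‖x‖ ^ 2) + (g x).re) := by
    intro x
    rw [vkme, Complex.norm_real, Real.norm_eq_abs, sq_abs]
    have hre : (g x).re = Real.exp (-1 * ‖x‖ ^ 2) * Real.cos (2 * (inner ℝ k x : ℝ)) := by
      rw [hg]
      simp only [Complex.exp_re, Complex.add_re, Complex.add_im, Complex.neg_re, Complex.neg_im,
        Complex.one_re, Complex.mul_re, Complex.mul_im, Complex.I_re, Complex.I_im,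
        Complex.ofReal_re, Complex.ofReal_im, Complex.one_im, ← Complex.ofReal_pow]
      norm_num
    rw [hre]
    have hsq : Real.exp (-‖x‖ ^ 2 / 2) ^ 2 = Real.exp (-1 * ‖x‖ ^ 2) := by
      rw [sq, ← Real.exp_add]
      ring_nf
    have hcos : Real.cos (inner ℝ k x : ℝ) ^ 2 = 1 / 2 + Real.cos (2 * (inner ℝ k x : ℝ)) / 2 :=
      Real.cos_sq _
    rw [← hc]
    linear_combination c ^ 2 * Real.exp (-‖x‖ ^ 2 / 2) ^ 2 * hcos +
      c ^ 2 * (1 / 2 + Real.cos (2 * (inner ℝ k x : ℝ)) / 2) * hsq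
  have hgire : Integrable (fun x : Ed d => (g x).re) := hgint.re
  have hint : ∫ x : Ed d, ‖vkme k m ε x‖ ^ 2
      = c ^ 2 / 2 * (π ^ ((d : ℝ) / 2) + (∫ x : Ed d, g x).re) := by
    rw [MeasureTheory.integral_congr_ae (Filter.Eventually.of_forall hpt),
      MeasureTheory.integral_const_mul,
      MeasureTheory.integral_add hfint hgire]
    congr 2
    · have := GaussianFourier.integral_rexp_neg_mul_sq_norm (V := Ed d) one_pos
      rw [this, finrank_euclideanSpace_fin]
      norm_num
    · exact integral_re hgint
  have hgval : (∫ x : Ed d, g x).re = π ^ ((d : ℝ) / 2) * Real.exp (-‖k‖ ^ 2) := by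
    rw [hg, GaussianFourier.integral_cexp_neg_mul_sq_norm_add hb1 (2 * Complex.I) k]
    have h1 : ((π : ℂ) / 1) ^ ((Module.finrank ℝ (Ed d) : ℂ) / 2)
        = ((π ^ ((d : ℝ) / 2) : ℝ) : ℂ) := by
      rw [Complex.ofReal_cpow (le_of_lt pi_pos)]
      rw [finrank_euclideanSpace_fin]
      push_cast
      norm_num
    have h2 : Complex.exp ((2 * Complex.I) ^ 2 * (‖k‖ : ℂ) ^ 2 / (4 * 1))
        = ((Real.exp (-‖k‖ ^ 2) : ℝ) : ℂ) := by
      rw [Complex.ofReal_exp]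
      congr 1
      rw [mul_pow, Complex.I_sq]
      push_cast
      ring
    rw [h1, h2, ← Complex.ofReal_mul, Complex.ofReal_re]
  rw [L2Norm]
  have hFpos : (0:ℝ) < π ^ ((d : ℝ) / 2) := by positivity
  have hgre : (0:ℝ) ≤ (∫ x : Ed d, g x).re := by
    rw [hgval]; positivity
  have key : c ^ 2 * (π ^ ((d : ℝ) / 2) / 2) ≤ ∫ x : Ed d, ‖vkme k m ε x‖ ^ 2 := by
    rw [hint]; nlinarith
  calc c * Real.sqrt (π ^ ((d : ℝ) / 2) / 2)
      = Real.sqrt (c ^ 2 * (π ^ ((d : ℝ) / 2) / 2)) := by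
        rw [Real.sqrt_mul (by positivity), Real.sqrt_sq hcpos.le]
    _ ≤ Real.sqrt (∫ x : Ed d, ‖vkme k m ε x‖ ^ 2) := Real.sqrt_le_sqrt key

lemma eventually_big (r B D' γ : ℝ) (hγ : γ < 2) (hD' : 0 ≤ D') :
    ∀ᶠ a in Filter.atTop, 1 ≤ a ∧ r ≤ a ∧ 1 ≤ (a - r) ^ 2 / 2 - B ∧
      D' * a ^ γ < (a - r) ^ 2 / 2 - B := by
  have h1 : Filter.Tendsto (fun a : ℝ => a ^ (γ - 2)) Filter.atTop (nhds 0) := by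
    have := tendsto_rpow_neg_atTop (show (0:ℝ) < 2 - γ by linarith)
    rw [show -(2 - γ) = γ - 2 by ring] at this
    exact this
  have h2 : Filter.Tendsto (fun a : ℝ => 1/8 - D' * a ^ (γ - 2)) Filter.atTop (nhds (1/8)) := by
    have := Filter.Tendsto.sub (tendsto_const_nhds (x := (1/8 : ℝ)) (f := Filter.atTop))
      (h1.const_mul D')
    simpa using this
  have h3 : Filter.Tendsto (fun a : ℝ => a ^ 2 * (1/8 - D' * a ^ (γ - 2)))
      Filter.atTop Filter.atTop :=
    (Filter.tendsto_pow_atTop (two_ne_zero)).atTop_mul_pos (by norm_num) h2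
  have h4 : Filter.Tendsto (fun a : ℝ => a ^ 2 * (1/8 - D' * a ^ (γ - 2)) - B)
      Filter.atTop Filter.atTop := Filter.tendsto_atTop_add_const_right _ (-B) h3
  filter_upwards [h4.eventually_ge_atTop 1, Filter.eventually_ge_atTop (1:ℝ),
    Filter.eventually_ge_atTop (2 * |r| + 1)] with a hbig ha1 har
  have hr' : r ≤ a := by
    have := le_abs_self r
    linarith
  have ha0 : (0:ℝ) < a := by linarith
  have hid : a ^ (γ - 2) * a ^ 2 = a ^ γ := by
    rw [← Real.rpow_natCast a 2, ← Real.rpow_add ha0]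
    norm_num
  have hkey : a ^ 2 * (1/8 - D' * a ^ (γ - 2)) - B = a ^ 2 / 8 - B - D' * a ^ γ := by
    rw [← hid]; ring
  rw [hkey] at hbig
  have hsq : a ^ 2 / 4 ≤ (a - r) ^ 2 := by nlinarith [le_abs_self r, neg_abs_le r]
  have hγ0 : 0 ≤ a ^ γ := Real.rpow_nonneg ha0.le γ
  refine ⟨ha1, hr', by nlinarith, by nlinarith⟩


theorem vkme_instability_L2' {d : ℕ} (hd : 1 ≤ d) (r ε : ℝ) (hr : 0 < r) (hε : 0 < ε)
    (m : ℕ) (hm : 0 < m) (β₂ c₂ : ℝ) (hβ : (m : ℝ) / 2 < β₂) (hc : 0 < c₂) :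
    ∃ K : ℝ, 0 < K ∧
      ∀ k : Ed d, K ≤ ‖k‖ →
        L2Norm (vkme k m ε) >
          c₂ * Real.log (3 + (supNormOn (ball d r) (FT (vkme k m ε)))⁻¹) ^ (-β₂) := by
  have hβ0 : 0 < β₂ := lt_of_lt_of_le (by positivity) hβ.le
  set C1 : ℝ := Real.sqrt (π ^ ((d : ℝ) / 2) / 2) with hC1
  have hC1pos : 0 < C1 := Real.sqrt_pos.mpr (by positivity)
  set Cd : ℝ := ((2 * π) ^ d)⁻¹ * (2 * π) ^ ((d : ℝ) / 2) with hCd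
  have hCdpos : 0 < Cd := by positivity
  set B : ℝ := Real.log (ε * Cd) with hB
  set D : ℝ := c₂ / (ε * C1) with hD
  have hDpos : 0 < D := by positivity
  set D' : ℝ := D ^ (β₂⁻¹) with hD'
  have hD'pos : 0 < D' := Real.rpow_pos_of_pos hDpos _
  set γ : ℝ := (m : ℝ) / β₂ with hγdef
  have hγ2 : γ < 2 := by
    rw [hγdef, div_lt_iff₀ hβ0]
    linarith
  obtain ⟨K₀, hK₀⟩ := (Filter.eventually_atTop).mp (eventually_big r B D' γ hγ2 hD'pos.le)
  refine ⟨max K₀ (max r 1), lt_of_lt_of_le one_pos (le_trans (le_max_right r 1) (le_max_right _ _)), ?_⟩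
  intro k hkK
  set a : ℝ := ‖k‖ with ha
  have haK₀ : K₀ ≤ a := le_trans (le_max_left _ _) hkK
  obtain ⟨ha1, har, hl1, hlD⟩ := hK₀ a haK₀
  have hapos : (0:ℝ) < a := by linarith
  have hk0 : k ≠ 0 := norm_pos_iff.mp (by rw [← ha]; exact hapos)
  have ham1 : (1:ℝ) ≤ a ^ m := one_le_pow₀ ha1
  set S : ℝ := supNormOn (ball d r) (FT (vkme k m ε)) with hS
  have hS0 : 0 < S := sup_ft_pos hd r hr k m hε har
  have hSU : S ≤ ε * Cd * Real.exp (-(a - r) ^ 2 / 2) := by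
    refine le_trans (sup_ft_le r hr k m hε har) ?_
    have expr_eq : ((2 * π) ^ d)⁻¹ * (ε * (‖k‖ ^ m)⁻¹) * (2 * π) ^ ((d : ℝ) / 2) *
        Real.exp (-(‖k‖ - r) ^ 2 / 2)
        = ε * ((a ^ m)⁻¹ * Cd) * Real.exp (-(a - r) ^ 2 / 2) := by
      rw [hCd, ← ha]; ring
    rw [expr_eq]
    gcongr
    have : (a ^ m)⁻¹ ≤ 1 := inv_le_one_of_one_le₀ ham1
    nlinarith
  set L : ℝ := Real.log (3 + S⁻¹) with hL
  have hlogS : Real.log S ≤ B - (a - r) ^ 2 / 2 := by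
    calc Real.log S ≤ Real.log (ε * Cd * Real.exp (-(a - r) ^ 2 / 2)) :=
          Real.log_le_log hS0 hSU
      _ = B - (a - r) ^ 2 / 2 := by
          rw [Real.log_mul (by positivity) (Real.exp_pos _).ne', Real.log_exp, hB]
          ring
  have hLge : (a - r) ^ 2 / 2 - B ≤ L := by
    have h1 : Real.log (S⁻¹) ≤ L := by
      apply Real.log_le_log (by positivity)
      linarith
    rw [Real.log_inv] at h1
    linarith
  set ℓ : ℝ := (a - r) ^ 2 / 2 - B with hℓ
  have hℓpos : 0 < ℓ := by linarith
  have hLpos : 0 < L := by linarith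
  -- key power inequality : D * a ^ m < ℓ ^ β₂
  have hpow : D * a ^ m < ℓ ^ β₂ := by
    have h1 : (D' * a ^ γ) ^ β₂ < ℓ ^ β₂ :=
      Real.rpow_lt_rpow (by positivity) hlD hβ0
    have h2 : (D' * a ^ γ) ^ β₂ = D * a ^ m := by
      rw [Real.mul_rpow hD'pos.le (Real.rpow_nonneg hapos.le _), hD',
        ← Real.rpow_natCast a m, ← Real.rpow_mul hDpos.le, ← Real.rpow_mul hapos.le,
        inv_mul_cancel₀ hβ0.ne', hγdef, div_mul_cancel₀ _ hβ0.ne', Real.rpow_one]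
    linarith [h1, h2.symm ▸ h1]
  have hfinal : c₂ * L ^ (-β₂) < ε * (a ^ m)⁻¹ * C1 := by
    have hmono : L ^ (-β₂) ≤ ℓ ^ (-β₂) :=
      Real.rpow_le_rpow_of_nonpos hℓpos hLge (by linarith)
    have hneg : ℓ ^ (-β₂) = (ℓ ^ β₂)⁻¹ := Real.rpow_neg hℓpos.le _
    have hstep : c₂ * (ℓ ^ β₂)⁻¹ < c₂ / (D * a ^ m) := by
      rw [← div_eq_mul_inv]
      exact div_lt_div_of_pos_left hc (by positivity) hpow
    have hval : c₂ / (D * a ^ m) = ε * (a ^ m)⁻¹ * C1 := by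
      rw [hD]
      field_simp
    calc c₂ * L ^ (-β₂) ≤ c₂ * ℓ ^ (-β₂) := by gcongr
      _ = c₂ * (ℓ ^ β₂)⁻¹ := by rw [hneg]
      _ < c₂ / (D * a ^ m) := hstep
      _ = ε * (a ^ m)⁻¹ * C1 := hval
  have hl2 : ε * (a ^ m)⁻¹ * C1 ≤ L2Norm (vkme k m ε) := l2_vkme_ge k m hε hk0
  calc c₂ * L ^ (-β₂) < ε * (a ^ m)⁻¹ * C1 := hfinal
    _ ≤ L2Norm (vkme k m ε) := hl2

/-- Instability estimate (4.8) in the L² norm. -/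
theorem vkme_instability_L2 {d : ℕ} (hd : 1 ≤ d) (r ε : ℝ) (hr : 0 < r) (hε : 0 < ε)
    (m : ℕ) (hm : 0 < m) (β₂ c₂ : ℝ) (hβ : (m : ℝ) / 2 < β₂) (hc : 0 < c₂) :
    ∃ K : ℝ, 0 < K ∧
      ∀ k : Ed d, K ≤ ‖k‖ →
        L2Norm (vkme k m ε) >
          c₂ * Real.log (3 + (supNormOn (ball d r) (FT (vkme k m ε)))⁻¹) ^ (-β₂) := by
  exact vkme_instability_L2' hd r ε hr hε m hm β₂ c₂ hβ hc

end
end
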